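/- arXiv:2511.21929 — 5 statements merged into one kernel-verified Lean document; each statement's English description precedes it below -/
import Mathlib

section
/- For any random variable X with distribution measure μ and any β ∈ (0,1), the left quantile function satisfies lim_{α↓0} R_{[β-α,β]}(μ) = q_β^-(μ), i.e., the averaged quantile over a shrinking left interval converges to the left β-quantile. -/
open MeasureTheory Set Filter

/-- Left `t`-quantile of a Borel probability measure `μ` on `ℝ`. -/
noncomputable def mQuantile (μ : Measure ℝ) (t : ℝ) : ℝ :=
  sInf {x : ℝ | t ≤ (μ (Set.Iic x)).toReal}

/-- Averaged quantile functional `R_I` for a measure on `ℝ`. -/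
noncomputable def mAvgQuantile (μ : Measure ℝ) (I : Set ℝ) : ℝ :=
  (volume I).toReal⁻¹ * ∫ t in I, mQuantile μ t

namespace MQAux

variable (μ : Measure ℝ) [IsProbabilityMeasure μ]

lemma F_mono : Monotone (fun x => (μ (Set.Iic x)).toReal) := fun a b hab =>
  ENNReal.toReal_mono (measure_ne_top μ _) (measure_mono (Set.Iic_subset_Iic.2 hab))

lemma set_nonempty {t : ℝ} (ht : t < 1) :
    {x : ℝ | t ≤ (μ (Set.Iic x)).toReal}.Nonempty := by
  have h1 : Tendsto (fun x => (μ (Set.Iic x)).toReal) atTop (nhds 1) := by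
    have := (ENNReal.tendsto_toReal (measure_ne_top μ Set.univ)).comp
      (tendsto_measure_Iic_atTop (μ := μ))
    simpa [Function.comp_def] using this
  exact (h1.eventually_const_le ht).exists

lemma exists_lt {t : ℝ} (ht : 0 < t) : ∃ x₀ : ℝ, (μ (Set.Iic x₀)).toReal < t := by
  have h1 : Tendsto (fun x => (μ (Set.Ici x)).toReal) atBot (nhds 1) := by
    have := (ENNReal.tendsto_toReal (measure_ne_top μ Set.univ)).comp
      (tendsto_measure_Ici_atBot (μ := μ))
    simpa [Function.comp_def] using this
  have h2 : (1:ℝ) - t < 1 := by linarith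
  obtain ⟨x, hx⟩ := (h1.eventually_const_lt h2).exists
  refine ⟨x - 1, ?_⟩
  have hsub : Set.Iic (x - 1) ⊆ (Set.Ici x)ᶜ := by
    intro y hy
    simp only [Set.mem_compl_iff, Set.mem_Ici, not_le]
    exact lt_of_le_of_lt hy (by linarith)
  have hm : (μ (Set.Iic (x - 1))).toReal ≤ (μ (Set.Ici x)ᶜ).toReal :=
    ENNReal.toReal_mono (measure_ne_top μ _) (measure_mono hsub)
  have hc : (μ (Set.Ici x)ᶜ).toReal = 1 - (μ (Set.Ici x)).toReal := by
    rw [measure_compl measurableSet_Ici (measure_ne_top μ _)]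
    rw [ENNReal.toReal_sub_of_le (measure_mono (Set.subset_univ _)) (measure_ne_top μ _)]
    simp
  rw [hc] at hm
  linarith

lemma set_bddBelow {t : ℝ} (ht : 0 < t) :
    BddBelow {x : ℝ | t ≤ (μ (Set.Iic x)).toReal} := by
  obtain ⟨x₀, hx₀⟩ := exists_lt μ ht
  refine ⟨x₀, fun y hy => ?_⟩
  by_contra hlt
  push_neg at hlt
  exact absurd (le_trans hy (F_mono μ hlt.le)) (not_le.2 hx₀)

lemma mQ_mono {s t : ℝ} (hs : 0 < s) (hst : s ≤ t) (ht : t < 1) :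
    mQuantile μ s ≤ mQuantile μ t := by
  refine csInf_le_csInf (set_bddBelow μ hs) (set_nonempty μ ht) ?_
  intro x hx
  exact le_trans hst hx

/-- The key lower-bound lemma near `β`. -/
lemma mQ_lower {β ε : ℝ} (hβ : β ∈ Set.Ioo (0:ℝ) 1) (hε : 0 < ε) :
    ∃ c : ℝ, 0 ≤ c ∧ c < β ∧ ∀ t, c < t → t ≤ β → mQuantile μ β - ε ≤ mQuantile μ t := by
  set y := mQuantile μ β - ε with hy
  have hFy : (μ (Set.Iic y)).toReal < β := by
    by_contra h
    push_neg at h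
    have hmem : y ∈ {x : ℝ | β ≤ (μ (Set.Iic x)).toReal} := h
    have := csInf_le (set_bddBelow μ hβ.1) hmem
    have : mQuantile μ β ≤ mQuantile μ β - ε := this
    linarith
  refine ⟨max ((μ (Set.Iic y)).toReal) 0, le_max_right _ _,
    max_lt hFy hβ.1, fun t hct htβ => ?_⟩
  have hFyt : (μ (Set.Iic y)).toReal < t := lt_of_le_of_lt (le_max_left _ _) hct
  refine le_csInf (set_nonempty μ (lt_of_le_of_lt htβ hβ.2)) ?_
  intro b hb
  by_contra hby
  push_neg at hby
  have : (μ (Set.Iic b)).toReal ≤ (μ (Set.Iic y)).toReal := F_mono μ hby.le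
  exact absurd (le_trans hb this) (not_le.2 hFyt)

end MQAux

theorem stmt2 (μ : Measure ℝ) [IsProbabilityMeasure μ] (β : ℝ) (hβ : β ∈ Set.Ioo (0 : ℝ) 1) :
    Filter.Tendsto (fun α : ℝ => mAvgQuantile μ (Set.Icc (β - α) β))
      (nhdsWithin 0 (Set.Ioi 0)) (nhds (mQuantile μ β)) := by
  rw [Metric.tendsto_nhds]
  intro ε hε
  obtain ⟨c, hc0, hcβ, hc⟩ := MQAux.mQ_lower μ hβ (half_pos hε)
  have hδ : (0:ℝ) < β - c := by linarith
  filter_upwards [Ioo_mem_nhdsGT_of_mem (Set.mem_Ico.2 ⟨le_refl 0, hδ⟩)] with α hα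
  obtain ⟨hα0, hαδ⟩ := hα
  have hba : c < β - α := by linarith
  have hba0 : 0 < β - α := lt_of_le_of_lt hc0 hba
  -- bounds on the quantile on the interval
  have hub : ∀ t ∈ Set.Icc (β - α) β, mQuantile μ t ≤ mQuantile μ β := fun t ht =>
    MQAux.mQ_mono μ (lt_of_lt_of_le hba0 ht.1) ht.2 hβ.2
  have hlb : ∀ t ∈ Set.Icc (β - α) β, mQuantile μ β - ε/2 ≤ mQuantile μ t := fun t ht =>
    hc t (lt_of_lt_of_le hba ht.1) ht.2
  have hmono : MonotoneOn (mQuantile μ) (Set.Icc (β - α) β) := by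
    intro s hs t ht hst
    exact MQAux.mQ_mono μ (lt_of_lt_of_le hba0 hs.1) hst (lt_of_le_of_lt ht.2 hβ.2)
  have hint : IntegrableOn (mQuantile μ) (Set.Icc (β - α) β) volume :=
    hmono.integrableOn_isCompact isCompact_Icc
  have hvol : (volume (Set.Icc (β - α) β)).toReal = α := by
    rw [Real.volume_Icc]
    rw [ENNReal.toReal_ofReal (by linarith)]
    ring
  have hconst : ∀ (r : ℝ), IntegrableOn (fun _ : ℝ => r) (Set.Icc (β - α) β) volume := by
    intro r
    exact integrableOn_const (by rw [Real.volume_Icc]; exact ENNReal.ofReal_ne_top)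
  have hIle : ∫ t in Set.Icc (β - α) β, mQuantile μ t ≤ α * mQuantile μ β := by
    have := setIntegral_mono_on hint (hconst (mQuantile μ β)) measurableSet_Icc hub
    rwa [setIntegral_const, Measure.real, hvol, smul_eq_mul] at this
  have hIge : α * (mQuantile μ β - ε/2) ≤ ∫ t in Set.Icc (β - α) β, mQuantile μ t := by
    have := setIntegral_mono_on (hconst (mQuantile μ β - ε/2)) hint measurableSet_Icc hlb
    rwa [setIntegral_const, Measure.real, hvol, smul_eq_mul] at this
  have havg : mAvgQuantile μ (Set.Icc (β - α) β)
      = α⁻¹ * ∫ t in Set.Icc (β - α) β, mQuantile μ t := by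
    rw [mAvgQuantile, hvol]
  rw [havg, Real.dist_eq]
  have h1 : α⁻¹ * ∫ t in Set.Icc (β - α) β, mQuantile μ t ≤ mQuantile μ β := by
    rw [inv_mul_le_iff₀ hα0]
    linarith
  have h2 : mQuantile μ β - ε/2 ≤ α⁻¹ * ∫ t in Set.Icc (β - α) β, mQuantile μ t := by
    rw [le_inv_mul_iff₀ hα0]
    exact hIge
  rw [abs_lt]
  constructor <;> linarith
end

section
/- Let μ be a Borel probability measure on ℝ, r ∈ (0,1), and U a random variable uniformly distributed on [r,1]. Then the distribution of q_U^-(μ) is the r-tail distribution μ^{r+}, i.e., P(q_U^-(μ) ≤ x) = max{(F(x) - r)/(1-r), 0} for all x ∈ ℝ, where F(x) = μ((-∞,x]). -/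
open MeasureTheory Set Filter
open Topology

open ProbabilityTheory in
lemma mQuantile_le_iff (μ : Measure ℝ) [IsProbabilityMeasure μ] {t x : ℝ}
    (ht0 : 0 < t) (ht1 : t < 1) :
    mQuantile μ t ≤ x ↔ t ≤ (μ (Set.Iic x)).toReal := by
  have hF : ∀ y, (μ (Set.Iic y)).toReal = cdf μ y := fun y => (cdf_eq_real μ y).symm
  set A := {y : ℝ | t ≤ (μ (Set.Iic y)).toReal} with hA
  have hAc : ∀ y, y ∈ A ↔ t ≤ cdf μ y := by intro y; rw [hA, mem_setOf_eq, hF y]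
  have hne : A.Nonempty := by
    obtain ⟨y, hy⟩ := ((tendsto_cdf_atTop μ).eventually (eventually_gt_nhds ht1)).exists
    exact ⟨y, (hAc y).mpr hy.le⟩
  have hbdd : BddBelow A := by
    obtain ⟨y₀, hy₀⟩ :=
      eventually_atBot.mp ((tendsto_cdf_atBot μ).eventually (eventually_lt_nhds ht0))
    refine ⟨y₀, fun y hy => ?_⟩
    by_contra h
    push_neg at h
    exact absurd ((hAc y).mp hy) (not_le.mpr (hy₀ y h.le))
  unfold mQuantile
  constructor
  · intro h
    have key : t ≤ cdf μ (sInf A) := by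
      have hcont : Tendsto (cdf μ) (𝓝[>] (sInf A)) (𝓝 (cdf μ (sInf A))) :=
        ((cdf μ).right_continuous (sInf A)).mono_left (nhdsWithin_mono _ Ioi_subset_Ici_self)
      refine ge_of_tendsto hcont ?_
      filter_upwards [self_mem_nhdsWithin] with y hy
      obtain ⟨a, ha, hay⟩ := exists_lt_of_csInf_lt hne hy
      exact ((hAc a).mp ha).trans ((cdf μ).mono hay.le)
    rw [hF]
    exact key.trans ((cdf μ).mono h)
  · intro h
    exact csInf_le hbdd h

theorem stmt3 {Ω : Type*} [MeasurableSpace Ω] (P : Measure Ω) [IsProbabilityMeasure P]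
    (μ : Measure ℝ) [IsProbabilityMeasure μ] (r : ℝ) (hr : r ∈ Set.Ioo (0 : ℝ) 1)
    (U : Ω → ℝ)
    (hU : Measure.map U P = (ENNReal.ofReal (1 - r))⁻¹ • volume.restrict (Set.Icc r 1)) :
    ∀ x : ℝ, (P {ω | mQuantile μ (U ω) ≤ x}).toReal
      = max (((μ (Set.Iic x)).toReal - r) / (1 - r)) 0 := by
  intro x
  have hr0 : (0:ℝ) < r := hr.1
  have hr1 : r < 1 := hr.2
  have h1r : (0:ℝ) < 1 - r := by linarith
  set c := (μ (Set.Iic x)).toReal with hc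
  have hc1 : c ≤ 1 := by
    have h1 : μ (Set.Iic x) ≤ 1 := prob_le_one
    simpa using ENNReal.toReal_mono ENNReal.one_ne_top h1
  have hofr : ENNReal.ofReal (1 - r) ≠ 0 := by
    simp only [ne_eq, ENNReal.ofReal_eq_zero, not_le]; linarith
  have hofrt : ENNReal.ofReal (1 - r) ≠ ⊤ := ENNReal.ofReal_ne_top
  have hνIcc : ((ENNReal.ofReal (1 - r))⁻¹ • volume.restrict (Set.Icc r 1)) (Set.Icc r 1) = 1 := by
    rw [Measure.smul_apply, smul_eq_mul, Measure.restrict_apply measurableSet_Icc,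
      Set.inter_self, Real.volume_Icc, ENNReal.inv_mul_cancel hofr hofrt]
  have hUmeas : AEMeasurable U P := by
    by_contra h
    rw [Measure.map_of_not_aemeasurable h] at hU
    rw [← hU] at hνIcc
    simp at hνIcc
  have hmap : ∀ s : Set ℝ, MeasurableSet s →
      P (U ⁻¹' s) = (ENNReal.ofReal (1 - r))⁻¹ * volume (s ∩ Set.Icc r 1) := by
    intro s hs
    rw [← Measure.map_apply_of_aemeasurable hUmeas hs, hU, Measure.smul_apply, smul_eq_mul,
      Measure.restrict_apply hs]
  have hnull : P (U ⁻¹' (Set.Iio r ∪ Set.Ici 1)) = 0 := by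
    rw [hmap _ (measurableSet_Iio.union measurableSet_Ici)]
    have hset : (Set.Iio r ∪ Set.Ici 1) ∩ Set.Icc r 1 = {(1:ℝ)} := by
      ext y
      simp only [Set.mem_inter_iff, Set.mem_union, Set.mem_Iio, Set.mem_Ici, Set.mem_Icc,
        Set.mem_singleton_iff]
      constructor
      · rintro ⟨h1 | h1, h2, h3⟩
        · linarith
        · linarith
      · rintro rfl
        exact ⟨Or.inr le_rfl, hr1.le, le_rfl⟩
    rw [hset, Real.volume_singleton, mul_zero]
  have hae : {ω | mQuantile μ (U ω) ≤ x} =ᵐ[P] U ⁻¹' (Set.Iic c) := by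
    rw [Filter.eventuallyEq_set]
    have hmem : ∀ᵐ ω ∂P, U ω ∈ Set.Ico r 1 := by
      rw [ae_iff]
      have : {ω | ¬ U ω ∈ Set.Ico r 1} = U ⁻¹' (Set.Iio r ∪ Set.Ici 1) := by
        ext ω
        simp only [Set.mem_setOf_eq, Set.mem_preimage, Set.mem_Ico, Set.mem_union,
          Set.mem_Iio, Set.mem_Ici, not_and_or, not_le, not_lt]
      rw [this]
      exact hnull
    filter_upwards [hmem] with ω hω
    simp only [Set.mem_setOf_eq, Set.mem_preimage, Set.mem_Iic]
    exact mQuantile_le_iff μ (hr0.trans_le hω.1) hω.2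
  have hIic : Set.Iic c ∩ Set.Icc r 1 = Set.Icc r c := by
    ext y
    simp only [Set.mem_inter_iff, Set.mem_Iic, Set.mem_Icc]
    constructor
    · rintro ⟨h1, h2, h3⟩; exact ⟨h2, h1⟩
    · rintro ⟨h1, h2⟩; exact ⟨h2, h1, h2.trans hc1⟩
  have hP : P {ω | mQuantile μ (U ω) ≤ x}
      = (ENNReal.ofReal (1 - r))⁻¹ * ENNReal.ofReal (c - r) := by
    rw [measure_congr hae, hmap _ measurableSet_Iic, hIic, Real.volume_Icc]
  rw [hP]
  rcases le_or_gt c r with h | h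
  · have h0 : ENNReal.ofReal (c - r) = 0 := by
      rw [ENNReal.ofReal_eq_zero]; linarith
    rw [h0, mul_zero, ENNReal.toReal_zero, max_eq_right]
    exact div_nonpos_of_nonpos_of_nonneg (by linarith) h1r.le
  · rw [ENNReal.toReal_mul, ENNReal.toReal_inv, ENNReal.toReal_ofReal h1r.le,
      ENNReal.toReal_ofReal (by linarith : (0:ℝ) ≤ c - r),
      max_eq_left (div_nonneg (by linarith) h1r.le)]
    ring
end

section
/- Let X be an integrable random variable, 0 ≤ r < r+s ≤ 1, and α ≥ 0, β > 0 with α + β ≤ 1 - r and α ≤ s. Then R_{[r, r+s]}(X) ≤ ((1-r-β)/s) · R_{[r, r+α] ∪ [r+α+β, 1]}(X) + (1 - (1-r-β)/s) · R_{[r+α, r+α+β]}(X). (This is the new RVaR inequality of the paper in the one-variable case n = 1.) -/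
open MeasureTheory Set Filter Topology

/-- Left `u`-quantile of a random variable `X` under measure `μ`. -/
noncomputable def leftQuantile {Ω : Type*} [MeasurableSpace Ω] (μ : Measure Ω)
    (X : Ω → ℝ) (u : ℝ) : ℝ :=
  sInf {x : ℝ | u ≤ (μ {ω | X ω ≤ x}).toReal}

/-- Averaged quantile functional `R_I`. -/
noncomputable def avgQuantile {Ω : Type*} [MeasurableSpace Ω] (μ : Measure Ω)
    (X : Ω → ℝ) (I : Set ℝ) : ℝ :=
  (volume I).toReal⁻¹ * ∫ u in I, leftQuantile μ X u

/-! ### Auxiliary integral comparison lemmas -/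

lemma twoSet_mono {f : ℝ → ℝ} {s s' : Set ℝ}
    (hs : MeasurableSet s) (hvs : volume s ≠ ⊤) (hvs' : volume s' ≠ ⊤)
    (hfs : IntegrableOn f s) (hfs' : IntegrableOn f s')
    (h : ∀ᵐ v ∂(volume.restrict s'), ∀ u ∈ s, f u ≤ f v) :
    (volume s').toReal * ∫ u in s, f u ≤ (volume s).toReal * ∫ v in s', f v := by
  have hfin : IsFiniteMeasure (volume.restrict s') :=
    ⟨by rw [Measure.restrict_apply_univ]; exact hvs'.lt_top⟩
  have h2 : ∀ᵐ v ∂(volume.restrict s'), (∫ u in s, f u) ≤ (volume s).toReal * f v := by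
    filter_upwards [h] with v hv
    calc ∫ u in s, f u ≤ ∫ _ in s, f v :=
          setIntegral_mono_on hfs (integrableOn_const hvs) hs
            (fun u hu => hv u hu)
      _ = (volume s).toReal * f v := by simp [setIntegral_const, smul_eq_mul, measureReal_def]
  have h3 := integral_mono_ae (integrable_const _) (hfs'.const_mul _) h2
  rw [integral_const, MeasureTheory.integral_const_mul] at h3
  rw [measureReal_restrict_apply_univ, measureReal_def] at h3
  simpa [smul_eq_mul] using h3

section QLemmas
variable {q : ℝ → ℝ}
  (hq : IntegrableOn q (Ioo 0 1) volume)
  (hm : ∀ ⦃u v : ℝ⦄, 0 < u → u ≤ v → v < 1 → q u ≤ q v)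

include hq in
lemma qint {a b : ℝ} (ha : 0 ≤ a) (hb : b ≤ 1) : IntegrableOn q (Ioc a b) volume := by
  have h1 : IntegrableOn q (Ioo a b) volume :=
    hq.mono_set (fun x hx => ⟨lt_of_le_of_lt ha hx.1, lt_of_lt_of_le hx.2 hb⟩)
  exact h1.congr_set_ae (MeasureTheory.Ioo_ae_eq_Ioc (μ := volume) (a := a) (b := b)).symm

include hq in
lemma qadd {a b c : ℝ} (ha : 0 ≤ a) (hab : a ≤ b) (hbc : b ≤ c) (hc : c ≤ 1) :
    ∫ u in Ioc a c, q u = (∫ u in Ioc a b, q u) + ∫ u in Ioc b c, q u := by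
  rw [← Ioc_union_Ioc_eq_Ioc hab hbc]
  exact setIntegral_union (Set.Ioc_disjoint_Ioc_of_le le_rfl) measurableSet_Ioc
    (qint hq ha (hbc.trans hc)) (qint hq (ha.trans hab) hc)

include hq hm in
lemma qadj {p m w : ℝ} (hp : 0 ≤ p) (hpm : p ≤ m) (hmw : m ≤ w) (hw : w ≤ 1) :
    (w - m) * ∫ u in Ioc p m, q u ≤ (m - p) * ∫ u in Ioc m w, q u := by
  have h1 : ∀ᵐ v : ℝ, v ≠ (1:ℝ) := by
    rw [ae_iff]
    simp
  have key := twoSet_mono (s := Ioc p m) (s' := Ioc m w) measurableSet_Ioc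
    (by simp [Real.volume_Ioc]) (by simp [Real.volume_Ioc])
    (qint hq hp (hmw.trans hw)) (qint hq (hp.trans hpm) hw) ?_
  · rwa [Real.volume_Ioc, Real.volume_Ioc, ENNReal.toReal_ofReal (by linarith),
      ENNReal.toReal_ofReal (by linarith)] at key
  · filter_upwards [ae_restrict_of_ae h1, ae_restrict_mem measurableSet_Ioc] with v hv1 hv2 u hu
    exact hm (lt_of_le_of_lt hp hu.1) (hu.2.trans hv2.1.le)
      (lt_of_le_of_ne (hv2.2.trans hw) hv1)

include hq hm in
lemma qcomp {a₁ b₁ a₂ b₂ : ℝ} (ha₁ : 0 ≤ a₁) (h₁ : a₁ ≤ b₁) (h₂ : a₂ ≤ b₂)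
    (haa : a₁ ≤ a₂) (hbb : b₁ ≤ b₂) (hb₂ : b₂ ≤ 1) :
    (b₂ - a₂) * ∫ u in Ioc a₁ b₁, q u ≤ (b₁ - a₁) * ∫ u in Ioc a₂ b₂, q u := by
  have e1 : (b₂ - a₁) * ∫ u in Ioc a₁ b₁, q u ≤ (b₁ - a₁) * ∫ u in Ioc a₁ b₂, q u := by
    have hadj := qadj hq hm ha₁ h₁ hbb hb₂
    have hsum := qadd hq ha₁ h₁ hbb hb₂
    nlinarith [hadj, hsum]
  have e2 : (b₂ - a₂) * ∫ u in Ioc a₁ b₂, q u ≤ (b₂ - a₁) * ∫ u in Ioc a₂ b₂, q u := by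
    have hadj := qadj hq hm ha₁ haa h₂ hb₂
    have hsum := qadd hq ha₁ haa h₂ hb₂
    nlinarith [hadj, hsum]
  rcases eq_or_lt_of_le (h₁.trans hbb) with hdeg | hlt
  · have h3 : b₁ = a₁ := by linarith
    have h4 : b₂ = a₂ := by linarith
    rw [h3, h4, Set.Ioc_eq_empty (lt_irrefl a₁), Set.Ioc_eq_empty (lt_irrefl a₂)]
    simp
  · have c1 := mul_le_mul_of_nonneg_left e1 (by linarith : (0:ℝ) ≤ b₂ - a₂)
    have c2 := mul_le_mul_of_nonneg_left e2 (by linarith : (0:ℝ) ≤ b₁ - a₁)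
    have c3 : (b₂ - a₁) * ((b₂ - a₂) * ∫ u in Ioc a₁ b₁, q u)
        ≤ (b₂ - a₁) * ((b₁ - a₁) * ∫ u in Ioc a₂ b₂, q u) := by nlinarith
    exact le_of_mul_le_mul_left c3 (by linarith)

end QLemmas

/-! ### CDF and quantile properties -/

section Quantile
variable {Ω : Type*} [MeasurableSpace Ω] (μ : Measure Ω) [IsProbabilityMeasure μ]
  (X' : Ω → ℝ)

/-- auxiliary cdf -/
noncomputable def auxF (x : ℝ) : ℝ := (μ {ω | X' ω ≤ x}).toReal

/-- auxiliary quantile -/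
noncomputable def auxQ (u : ℝ) : ℝ := sInf {x | u ≤ auxF μ X' x}

lemma auxF_mono : Monotone (auxF μ X') := fun x y hxy =>
  ENNReal.toReal_mono (measure_ne_top μ _) (measure_mono (fun ω h => le_trans h hxy))

variable (hX'm : Measurable X')

include hX'm in
lemma auxF_exists_ge {v : ℝ} (hv : v < 1) : ∃ x : ℝ, v ≤ auxF μ X' x := by
  have hmono : Monotone (fun n : ℕ => {ω | X' ω ≤ (n : ℝ)}) := by
    intro m n h ω hω
    simp only [mem_setOf_eq] at *
    exact le_trans hω (Nat.cast_le.2 h)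
  have hU : (⋃ n : ℕ, {ω | X' ω ≤ (n : ℝ)}) = univ := by
    ext ω; simp only [mem_iUnion, mem_setOf_eq, mem_univ, iff_true]
    obtain ⟨n, hn⟩ := exists_nat_ge (X' ω); exact ⟨n, hn⟩
  have hT : Tendsto (fun n : ℕ => μ {ω | X' ω ≤ (n : ℝ)}) atTop (𝓝 (μ univ)) := by
    have := tendsto_measure_iUnion_atTop (μ := μ) hmono
    rwa [hU] at this
  rw [measure_univ] at hT
  have hT2 : Tendsto (fun n : ℕ => auxF μ X' (n : ℝ)) atTop (𝓝 1) := by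
    have := (ENNReal.tendsto_toReal (by simp)).comp hT
    simpa [auxF, Function.comp_def] using this
  obtain ⟨n, hn⟩ := (hT2.eventually (eventually_gt_nhds hv)).exists
  exact ⟨n, hn.le⟩

include hX'm in
lemma auxF_exists_lt {u : ℝ} (hu : 0 < u) : ∃ x : ℝ, auxF μ X' x < u := by
  have hanti : Antitone (fun n : ℕ => {ω | X' ω ≤ -(n : ℝ)}) := by
    intro m n h ω hω
    simp only [mem_setOf_eq] at *
    have : (m : ℝ) ≤ n := Nat.cast_le.2 h
    linarith
  have hI : (⋂ n : ℕ, {ω | X' ω ≤ -(n : ℝ)}) = ∅ := by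
    ext ω; simp only [mem_iInter, mem_setOf_eq, mem_empty_iff_false, iff_false, not_forall]
    obtain ⟨n, hn⟩ := exists_nat_gt (-(X' ω))
    exact ⟨n, by push_neg; linarith⟩
  have hT : Tendsto (fun n : ℕ => μ {ω | X' ω ≤ -(n : ℝ)}) atTop
      (𝓝 (μ (⋂ n : ℕ, {ω | X' ω ≤ -(n : ℝ)}))) :=
    tendsto_measure_iInter_atTop
      (fun n => (measurableSet_le hX'm measurable_const).nullMeasurableSet)
      hanti ⟨0, measure_ne_top μ _⟩
  rw [hI, measure_empty] at hT
  have hT2 : Tendsto (fun n : ℕ => auxF μ X' (-(n : ℝ))) atTop (𝓝 0) := by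
    have := (ENNReal.tendsto_toReal (by simp)).comp hT
    simpa [auxF, Function.comp_def] using this
  obtain ⟨n, hn⟩ := (hT2.eventually (eventually_lt_nhds hu)).exists
  exact ⟨-(n : ℝ), hn⟩

include hX'm in
lemma auxF_rc (x : ℝ) :
    Tendsto (fun n : ℕ => auxF μ X' (x + 1 / ((n : ℝ) + 1))) atTop (𝓝 (auxF μ X' x)) := by
  have hanti : Antitone (fun n : ℕ => {ω | X' ω ≤ x + 1 / ((n : ℝ) + 1)}) := by
    intro m n h ω hω
    simp only [mem_setOf_eq] at *
    have h2 : (1 : ℝ) / ((n : ℝ) + 1) ≤ 1 / ((m : ℝ) + 1) := by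
      apply one_div_le_one_div_of_le (by positivity)
      have : (m : ℝ) ≤ n := Nat.cast_le.2 h
      linarith
    linarith
  have hI : (⋂ n : ℕ, {ω | X' ω ≤ x + 1 / ((n : ℝ) + 1)}) = {ω | X' ω ≤ x} := by
    ext ω
    simp only [mem_iInter, mem_setOf_eq]
    constructor
    · intro h
      by_contra hc
      push_neg at hc
      obtain ⟨n, hn⟩ := exists_nat_gt (1 / (X' ω - x))
      have hpos : 0 < X' ω - x := by linarith
      have h1 : 1 / ((n : ℝ) + 1) < X' ω - x := by
        rw [div_lt_iff₀ (by positivity)]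
        rw [div_lt_iff₀ hpos] at hn
        nlinarith [Nat.cast_nonneg (α := ℝ) n]
      have := h n
      linarith
    · intro h n
      have : (0:ℝ) < 1 / ((n : ℝ) + 1) := by positivity
      linarith
  have hT := tendsto_measure_iInter_atTop (μ := μ)
    (fun n => (measurableSet_le hX'm measurable_const).nullMeasurableSet)
    hanti ⟨0, measure_ne_top μ _⟩
  rw [hI] at hT
  have := (ENNReal.tendsto_toReal (measure_ne_top μ _)).comp hT
  simpa [auxF, Function.comp_def] using this

include hX'm in
lemma auxQ_bddBelow {u : ℝ} (hu : 0 < u) : BddBelow {x | u ≤ auxF μ X' x} := by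
  obtain ⟨x₀, hx₀⟩ := auxF_exists_lt μ X' hX'm hu
  refine ⟨x₀, fun y hy => ?_⟩
  by_contra hc
  push_neg at hc
  exact absurd (le_trans hy (auxF_mono μ X' hc.le)) (not_le.2 hx₀)

include hX'm in
lemma auxQ_nonempty {u : ℝ} (hu : u < 1) : {x | u ≤ auxF μ X' x}.Nonempty :=
  auxF_exists_ge μ X' hX'm hu

include hX'm in
lemma auxQ_mem {u : ℝ} (hu : 0 < u) (hu1 : u < 1) : u ≤ auxF μ X' (auxQ μ X' u) := by
  have key : ∀ n : ℕ, u ≤ auxF μ X' (auxQ μ X' u + 1 / ((n : ℝ) + 1)) := by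
    intro n
    have hlt : auxQ μ X' u < auxQ μ X' u + 1 / ((n : ℝ) + 1) := by
      have : (0:ℝ) < 1 / ((n : ℝ) + 1) := by positivity
      linarith
    obtain ⟨y, hy, hylt⟩ := exists_lt_of_csInf_lt (auxQ_nonempty μ X' hX'm hu1) hlt
    exact le_trans hy (auxF_mono μ X' hylt.le)
  exact ge_of_tendsto (auxF_rc μ X' hX'm (auxQ μ X' u)) (Eventually.of_forall key)

include hX'm in
lemma auxQ_le_iff {u x : ℝ} (hu : 0 < u) (hu1 : u < 1) :
    auxQ μ X' u ≤ x ↔ u ≤ auxF μ X' x := by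
  constructor
  · intro h
    exact le_trans (auxQ_mem μ X' hX'm hu hu1) (auxF_mono μ X' h)
  · intro h
    exact csInf_le (auxQ_bddBelow μ X' hX'm hu) h

include hX'm in
lemma auxQ_mono : ∀ ⦃u v : ℝ⦄, 0 < u → u ≤ v → v < 1 → auxQ μ X' u ≤ auxQ μ X' v := by
  intro u v hu huv hv
  exact csInf_le_csInf (auxQ_bddBelow μ X' hX'm hu) (auxQ_nonempty μ X' hX'm hv)
    (fun x hx => le_trans huv hx)

include hX'm in
lemma auxQ_int (hX' : Integrable X' μ) :
    IntegrableOn (auxQ μ X') (Ioo 0 1) volume := by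
  set q := auxQ μ X' with hqdef
  set F := auxF μ X' with hFdef
  have hmonoOn : MonotoneOn q (Ioo 0 1) :=
    fun u hu v hv huv => auxQ_mono μ X' hX'm hu.1 huv hv.2
  have hmeas : AEMeasurable q (volume.restrict (Ioo 0 1)) :=
    aemeasurable_restrict_of_monotoneOn measurableSet_Ioo hmonoOn
  refine ⟨hmeas.aestronglyMeasurable, ?_⟩
  rw [hasFiniteIntegral_iff_norm]
  set C := ∫⁻ t in Ioi (0:ℝ), μ {ω | t ≤ |2 * X' ω|} with hCdef
  have habs : Integrable (fun ω => |2 * X' ω|) μ := (hX'.const_mul 2).abs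
  have hC : C = ∫⁻ ω, ENNReal.ofReal |2 * X' ω| ∂μ := by
    rw [hCdef]
    exact (lintegral_eq_lintegral_meas_le μ (Eventually.of_forall fun ω => abs_nonneg _)
      ((hX'm.const_mul 2).abs.aemeasurable)).symm
  have hCfin : C < ⊤ := by
    rw [hC]
    have := habs.2
    rw [hasFiniteIntegral_iff_norm] at this
    simpa [Real.norm_eq_abs, abs_abs] using this
  have hmu_le : ∀ x : ℝ, μ {ω | X' ω ≤ x} ≠ ⊤ := fun x => measure_ne_top μ _
  have hpos : ∀ t ∈ Ioi (0:ℝ),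
      (volume.restrict (Ioo (0:ℝ) 1)) {u | t ≤ max (q u) 0} ≤ μ {ω | t ≤ |2 * X' ω|} := by
    intro t ht
    simp only [mem_Ioi] at ht
    rw [Measure.restrict_apply' measurableSet_Ioo]
    calc volume ({u | t ≤ max (q u) 0} ∩ Ioo 0 1) ≤ volume (Ioo (F (t/2)) 1) := by
          apply measure_mono
          rintro u ⟨hu1, hu2⟩
          simp only [mem_setOf_eq] at hu1
          have hqu : t ≤ q u := by
            rcases max_cases (q u) 0 with ⟨h1, _⟩ | ⟨h1, _⟩ <;> rw [h1] at hu1 <;> linarith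
          have hnot : ¬ q u ≤ t / 2 := by linarith
          rw [auxQ_le_iff μ X' hX'm hu2.1 hu2.2] at hnot
          exact ⟨not_le.1 hnot, hu2.2⟩
      _ = ENNReal.ofReal (1 - F (t/2)) := by rw [Real.volume_Ioo]
      _ ≤ μ {ω | t ≤ |2 * X' ω|} := by
          apply ENNReal.ofReal_le_of_le_toReal
          have hsub : {ω | t/2 < X' ω} ⊆ {ω | t ≤ |2 * X' ω|} := by
            intro ω hω
            simp only [mem_setOf_eq] at *
            have : t ≤ 2 * X' ω := by linarith
            exact le_trans this (le_abs_self _)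
          have hcompl : (μ {ω | t/2 < X' ω}).toReal = 1 - F (t/2) := by
            have : {ω | t/2 < X' ω} = {ω | X' ω ≤ t/2}ᶜ := by
              ext ω; simp [not_le]
            rw [this, measure_compl (measurableSet_le hX'm measurable_const) (hmu_le _),
              measure_univ, ENNReal.toReal_sub_of_le (prob_le_one) (by simp)]
            simp [hFdef, auxF]
          rw [← hcompl]
          exact ENNReal.toReal_mono (measure_ne_top μ _) (measure_mono hsub)
  have hneg : ∀ t ∈ Ioi (0:ℝ),
      (volume.restrict (Ioo (0:ℝ) 1)) {u | t ≤ max (-(q u)) 0} ≤ μ {ω | t ≤ |2 * X' ω|} := by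
    intro t ht
    simp only [mem_Ioi] at ht
    rw [Measure.restrict_apply' measurableSet_Ioo]
    calc volume ({u | t ≤ max (-(q u)) 0} ∩ Ioo 0 1) ≤ volume (Ioc (0:ℝ) (F (-t))) := by
          apply measure_mono
          rintro u ⟨hu1, hu2⟩
          simp only [mem_setOf_eq] at hu1
          have hqu : q u ≤ -t := by
            rcases max_cases (-(q u)) 0 with ⟨h1, _⟩ | ⟨h1, _⟩ <;> rw [h1] at hu1 <;> linarith
          rw [auxQ_le_iff μ X' hX'm hu2.1 hu2.2] at hqu
          exact ⟨hu2.1, hqu⟩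
      _ = ENNReal.ofReal (F (-t)) := by rw [Real.volume_Ioc, sub_zero]
      _ ≤ μ {ω | t ≤ |2 * X' ω|} := by
          have h1 : ENNReal.ofReal (F (-t)) ≤ μ {ω | X' ω ≤ -t} := by
            simp only [hFdef, auxF]
            exact ENNReal.ofReal_toReal_le
          refine le_trans h1 (measure_mono ?_)
          intro ω hω
          simp only [mem_setOf_eq] at *
          have : -(2 * X' ω) ≥ 2 * t := by linarith
          calc t ≤ -(2 * X' ω) := by linarith
            _ ≤ |2 * X' ω| := neg_le_abs _
  have hmeas_rhs : Measurable (fun t : ℝ => μ {ω | t ≤ |2 * X' ω|}) := by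
    apply Antitone.measurable
    intro t t' h
    exact measure_mono (fun ω hω => le_trans h hω)
  have hA : (∫⁻ u in Ioo (0:ℝ) 1, ENNReal.ofReal (max (q u) 0)) ≤ C := by
    rw [lintegral_eq_lintegral_meas_le (f := fun u => max (q u) 0)
      (volume.restrict (Ioo (0:ℝ) 1))
      (Eventually.of_forall fun u => le_max_right _ _)
      (by exact hmeas.max aemeasurable_const)]
    exact setLIntegral_mono hmeas_rhs hpos
  have hB : (∫⁻ u in Ioo (0:ℝ) 1, ENNReal.ofReal (max (-(q u)) 0)) ≤ C := by
    rw [lintegral_eq_lintegral_meas_le (f := fun u => max (-(q u)) 0)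
      (volume.restrict (Ioo (0:ℝ) 1))
      (Eventually.of_forall fun u => le_max_right _ _)
      (by exact (hmeas.neg).max aemeasurable_const)]
    exact setLIntegral_mono hmeas_rhs hneg
  calc (∫⁻ u in Ioo (0:ℝ) 1, ENNReal.ofReal ‖q u‖)
      ≤ ∫⁻ u in Ioo (0:ℝ) 1,
          (ENNReal.ofReal (max (q u) 0) + ENNReal.ofReal (max (-(q u)) 0)) := by
        apply lintegral_mono
        intro u
        show ENNReal.ofReal ‖q u‖ ≤ ENNReal.ofReal (max (q u) 0) + ENNReal.ofReal (max (-(q u)) 0)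
        rw [← ENNReal.ofReal_add (le_max_right _ _) (le_max_right _ _)]
        apply ENNReal.ofReal_le_ofReal
        rw [Real.norm_eq_abs]
        rcases abs_cases (q u) with ⟨h1, h2⟩ | ⟨h1, h2⟩ <;> rw [h1] <;>
          nlinarith [le_max_left (q u) (0:ℝ), le_max_right (q u) (0:ℝ),
            le_max_left (-(q u)) (0:ℝ), le_max_right (-(q u)) (0:ℝ)]
    _ = (∫⁻ u in Ioo (0:ℝ) 1, ENNReal.ofReal (max (q u) 0))
        + ∫⁻ u in Ioo (0:ℝ) 1, ENNReal.ofReal (max (-(q u)) 0) :=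
        lintegral_add_left' (by exact (hmeas.max aemeasurable_const).ennreal_ofReal) _
    _ ≤ C + C := add_le_add hA hB
    _ < ⊤ := by
        rw [ENNReal.add_lt_top]
        exact ⟨hCfin, hCfin⟩

end Quantile

theorem stmt5 {Ω : Type*} [MeasurableSpace Ω] (μ : Measure Ω) [IsProbabilityMeasure μ]
    (X : Ω → ℝ) (hX : Integrable X μ) (r s α β : ℝ)
    (hr : 0 ≤ r) (hs : 0 < s) (hrs : r + s ≤ 1)
    (hα : 0 ≤ α) (hβ : 0 < β) (hαβ : α + β ≤ 1 - r) (hαs : α ≤ s) :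
    avgQuantile μ X (Set.Icc r (r + s))
      ≤ ((1 - r - β) / s) *
          avgQuantile μ X (Set.Icc r (r + α) ∪ Set.Icc (r + α + β) 1)
        + (1 - (1 - r - β) / s) * avgQuantile μ X (Set.Icc (r + α) (r + α + β)) := by
  -- replace X by a measurable representative
  set X' : Ω → ℝ := hX.1.mk X with hX'def
  have hX'm : Measurable X' := hX.1.stronglyMeasurable_mk.measurable
  have hae : X =ᵐ[μ] X' := hX.1.ae_eq_mk
  have hX' : Integrable X' μ := hX.congr hae
  have hFeq : ∀ x : ℝ, μ {ω | X ω ≤ x} = μ {ω | X' ω ≤ x} := by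
    intro x
    apply measure_congr
    filter_upwards [hae] with ω h
    show (X ω ≤ x) = (X' ω ≤ x)
    rw [h]
  have hqeq : leftQuantile μ X = auxQ μ X' := by
    funext u
    unfold leftQuantile auxQ auxF
    simp only [hFeq]
  set q := auxQ μ X' with hqdef
  have hq : IntegrableOn q (Ioo 0 1) volume := auxQ_int μ X' hX'm hX'
  have hm : ∀ ⦃u v : ℝ⦄, 0 < u → u ≤ v → v < 1 → q u ≤ q v := auxQ_mono μ X' hX'm
  -- abbreviations
  set a := r + α with hadef
  set b := r + α + β with hbdef
  set t := r + s with htdef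
  have hra : r ≤ a := by rw [hadef]; linarith
  have hab : a ≤ b := by rw [hadef, hbdef]; linarith
  have hat : a ≤ t := by rw [hadef, htdef]; linarith
  have hb1 : b ≤ 1 := by rw [hbdef]; linarith
  have ht1 : t ≤ 1 := by rw [htdef]; linarith
  have hrt : r < t := by rw [htdef]; linarith
  have ha0 : 0 ≤ a := by linarith
  -- key integral inequality
  have key : (∫ u in Ioc r t, q u)
      ≤ (∫ u in Ioc r a, q u) + (∫ u in Ioc b 1, q u)
        + ((r + s + β - 1) / β) * ∫ u in Ioc a b, q u := by
    have hsplit : (∫ u in Ioc r t, q u) = (∫ u in Ioc r a, q u) + ∫ u in Ioc a t, q u :=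
      qadd hq hr hra hat ht1
    have h2 : (∫ u in Ioc a t, q u)
        ≤ (∫ u in Ioc b 1, q u) + ((r + s + β - 1) / β) * ∫ u in Ioc a b, q u := by
      rcases le_or_gt (r + s + β - 1) 0 with hc | hc
      · -- "c ≤ 0" case
        rcases lt_or_eq_of_le hb1 with hb | hb
        · have c1 := qcomp hq hm ha0 hat hb1 hab ht1 le_rfl
          have c2 := qcomp hq hm ha0 hab hb1 hab hb1 le_rfl
          have hcb : (r + s + β - 1) / β * β = r + s + β - 1 := by
            field_simp
          have hnum : t - a - (1 - b) = r + s + β - 1 := by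
            rw [hadef, hbdef, htdef]; ring
          have hba : b - a = β := by rw [hadef, hbdef]; ring
          have hc' : (r + s + β - 1) / β ≤ 0 :=
            div_nonpos_iff.2 (Or.inr ⟨by linarith, hβ.le⟩)
          have e2 := mul_le_mul_of_nonpos_left c2 hc'
          rw [hba] at e2
          have e2' : (r + s + β - 1) * (∫ u in Ioc b 1, q u)
              ≤ (r + s + β - 1) / β * ((1 - b) * ∫ u in Ioc a b, q u) := by
            have hre : (r + s + β - 1) / β * (β * ∫ u in Ioc b 1, q u)
                = ((r + s + β - 1) / β * β) * ∫ u in Ioc b 1, q u := by ring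
            rw [hre, hcb] at e2
            exact e2
          have hta' : t - a = (1 - b) + (r + s + β - 1) := by linarith
          have hlast : (1 - b) * (∫ u in Ioc a t, q u)
              ≤ (1 - b) * ((∫ u in Ioc b 1, q u)
                + ((r + s + β - 1) / β) * ∫ u in Ioc a b, q u) := by
            calc (1 - b) * (∫ u in Ioc a t, q u)
                ≤ (t - a) * ∫ u in Ioc b 1, q u := c1
              _ = (1 - b) * (∫ u in Ioc b 1, q u)
                  + (r + s + β - 1) * ∫ u in Ioc b 1, q u := by rw [hta']; ring
              _ ≤ (1 - b) * (∫ u in Ioc b 1, q u)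
                  + (r + s + β - 1) / β * ((1 - b) * ∫ u in Ioc a b, q u) := by
                  linarith [e2']
              _ = (1 - b) * ((∫ u in Ioc b 1, q u)
                  + ((r + s + β - 1) / β) * ∫ u in Ioc a b, q u) := by ring
          exact le_of_mul_le_mul_left hlast (by linarith)
        · -- b = 1
          have hnum0 : t - a - (1 - b) = r + s + β - 1 := by
            rw [hadef, hbdef, htdef]; ring
          have hta : t = a := by
            have h1 : t - a ≤ 1 - b := by linarith
            rw [hb] at h1
            linarith
          have hnum : r + s + β - 1 = 0 := by
            rw [← hnum0, hta, hb]; ring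
          rw [hta, hnum, Set.Ioc_eq_empty (lt_irrefl a), hb,
            Set.Ioc_eq_empty (lt_irrefl (1:ℝ))]
          simp
      · -- "c > 0" case
        set m := t - 1 + b with hmdef
        have ham : a ≤ m := by rw [hmdef, hadef, hbdef, htdef]; linarith
        have hmb : m ≤ b := by rw [hmdef]; linarith
        have hmt : m ≤ t := by rw [hmdef]; linarith
        have hm0 : 0 ≤ m := le_trans ha0 ham
        have hsplit2 : (∫ u in Ioc a t, q u)
            = (∫ u in Ioc a m, q u) + ∫ u in Ioc m t, q u := qadd hq ha0 ham hmt ht1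
        have c3 := qcomp hq hm ha0 ham hab le_rfl hmb hb1
        have c4 := qcomp hq hm hm0 hmt hb1 hmb ht1 le_rfl
        -- from c3 : (b - a) * ∫ Ioc a m ≤ (m - a) * ∫ Ioc a b
        have hba : b - a = β := by rw [hadef, hbdef]; ring
        have hma : m - a = r + s + β - 1 := by rw [hmdef, hadef, hbdef, htdef]; ring
        have e3 : (∫ u in Ioc a m, q u) ≤ ((r + s + β - 1) / β) * ∫ u in Ioc a b, q u := by
          rw [div_mul_eq_mul_div, le_div_iff₀ hβ]
          rw [hba, hma] at c3
          linarith [c3]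
        have e4 : (∫ u in Ioc m t, q u) ≤ ∫ u in Ioc b 1, q u := by
          rcases lt_or_eq_of_le hb1 with hb | hb
          · have htm : t - m = 1 - b := by rw [hmdef]; ring
            have := c4
            rw [htm] at this
            exact le_of_mul_le_mul_left this (by linarith)
          · have htm : t = m := by rw [hmdef, hb]; ring
            rw [← htm, Set.Ioc_eq_empty (lt_irrefl t), hb,
              Set.Ioc_eq_empty (lt_irrefl (1:ℝ))]
        linarith
    linarith
  -- compute the three avgQuantile values
  have hint1 : IntegrableOn q (Icc r a) volume :=
    (qint hq hr (hab.trans hb1)).congr_set_ae (MeasureTheory.Ioc_ae_eq_Icc).symm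
  have hint2 : IntegrableOn q (Icc b 1) volume :=
    (qint hq (ha0.trans hab) le_rfl).congr_set_ae (MeasureTheory.Ioc_ae_eq_Icc).symm
  have hdisj : Disjoint (Icc r a) (Icc b 1) := by
    rw [Set.disjoint_left]
    intro x hx hx'
    have h1 : x ≤ a := hx.2
    have h2 : b ≤ x := hx'.1
    have : a < b := by rw [hadef, hbdef]; linarith
    linarith
  have E1 : avgQuantile μ X (Icc r t) = s⁻¹ * ∫ u in Ioc r t, q u := by
    unfold avgQuantile
    rw [hqeq, Real.volume_Icc, integral_Icc_eq_integral_Ioc,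
      show t - r = s by rw [htdef]; ring, ENNReal.toReal_ofReal hs.le]
  have E3 : avgQuantile μ X (Icc a b) = β⁻¹ * ∫ u in Ioc a b, q u := by
    unfold avgQuantile
    rw [hqeq, Real.volume_Icc, integral_Icc_eq_integral_Ioc,
      show b - a = β by rw [hadef, hbdef]; ring, ENNReal.toReal_ofReal hβ.le]
  have E2 : avgQuantile μ X (Icc r a ∪ Icc b 1)
      = (1 - r - β)⁻¹ * ((∫ u in Ioc r a, q u) + ∫ u in Ioc b 1, q u) := by
    unfold avgQuantile
    rw [hqeq, setIntegral_union hdisj measurableSet_Icc hint1 hint2,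
      measure_union hdisj measurableSet_Icc, Real.volume_Icc, Real.volume_Icc,
      integral_Icc_eq_integral_Ioc, integral_Icc_eq_integral_Ioc,
      ENNReal.toReal_add ENNReal.ofReal_ne_top ENNReal.ofReal_ne_top,
      ENNReal.toReal_ofReal (by linarith : (0:ℝ) ≤ a - r),
      ENNReal.toReal_ofReal (by linarith : (0:ℝ) ≤ 1 - b),
      show a - r + (1 - b) = 1 - r - β by rw [hadef, hbdef]; ring]
  rw [E1, E2, E3]
  set A := ∫ u in Ioc r a, q u
  set B := ∫ u in Ioc b 1, q u
  set M := ∫ u in Ioc a b, q u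
  set T := ∫ u in Ioc r t, q u
  have hL : 0 ≤ 1 - r - β := by linarith
  rcases eq_or_lt_of_le hL with hL0 | hLpos
  · -- degenerate case: 1 - r - β = 0, i.e. α = 0 and b = 1
    have hα0 : α = 0 := by linarith
    have hbeq : b = 1 := by rw [hbdef]; linarith
    have har : a = r := by rw [hadef, hα0, add_zero]
    have hA0 : A = 0 := by
      rw [show A = ∫ u in Ioc r a, q u from rfl, har, Set.Ioc_eq_empty (lt_irrefl r)]
      simp
    have hB0 : B = 0 := by
      rw [show B = ∫ u in Ioc b 1, q u from rfl, hbeq, Set.Ioc_eq_empty (lt_irrefl (1:ℝ))]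
      simp
    rw [← hL0]
    simp only [zero_div, zero_mul, sub_zero, one_mul, zero_add]
    have hkey2 : T ≤ (s / β) * M := by
      have : (r + s + β - 1) / β = s / β := by
        congr 1
        linarith
      rw [hA0, hB0] at key
      simpa [this] using key
    calc s⁻¹ * T ≤ s⁻¹ * ((s / β) * M) :=
          mul_le_mul_of_nonneg_left hkey2 (by positivity)
      _ = β⁻¹ * M := by field_simp
  · -- main case
    have hs' : s ≠ 0 := hs.ne'
    have hβ' : β ≠ 0 := hβ.ne'
    have hL' : 1 - r - β ≠ 0 := hLpos.ne'
    have hrhs : (1 - r - β) / s * ((1 - r - β)⁻¹ * (A + B)) + (1 - (1 - r - β) / s) * (β⁻¹ * M)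
        = s⁻¹ * (A + B + ((r + s + β - 1) / β) * M) := by
      field_simp
      ring
    rw [hrhs]
    exact mul_le_mul_of_nonneg_left key (by positivity)
end

section
/- Let X₁, X₂ be integrable random variables on a common probability space, S = X₁ + X₂, and let 0 < s ≤ 1 and α₁, α₂ ∈ (0,1) with α₁ + α₂ = s. Then R_{[0,s]}(S) ≤ R_{[0,α₁] ∪ [1-s+α₁, 1]}(X₁) + R_{[0,α₂] ∪ [1-s+α₂, 1]}(X₂). -/
open MeasureTheory Set Filter Topology

section Aux

variable {Ω : Type*} [MeasurableSpace Ω] {μ : Measure Ω} [IsProbabilityMeasure μ] {X : Ω → ℝ}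

lemma leftQuantile_congr {X' : Ω → ℝ} (h : X =ᵐ[μ] X') :
    leftQuantile μ X = leftQuantile μ X' := by
  have hset : ∀ x : ℝ, μ {ω | X ω ≤ x} = μ {ω | X' ω ≤ x} := by
    intro x
    refine measure_congr ?_
    filter_upwards [h] with ω hω
    show (X ω ≤ x) = (X' ω ≤ x)
    rw [hω]
  funext u
  unfold leftQuantile
  simp_rw [hset]

/-- The cdf. -/
noncomputable def rcdf (μ : Measure Ω) (X : Ω → ℝ) (x : ℝ) : ℝ := (μ {ω | X ω ≤ x}).toReal

lemma rcdf_mono : Monotone (rcdf μ X) := by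
  intro x y hxy
  exact ENNReal.toReal_mono (measure_ne_top _ _)
    (measure_mono (fun ω hω => le_trans hω hxy))

lemma rcdf_nonneg (x : ℝ) : 0 ≤ rcdf μ X x := ENNReal.toReal_nonneg

lemma rcdf_le_one (x : ℝ) : rcdf μ X x ≤ 1 := by
  rw [rcdf, show (1:ℝ) = (μ Set.univ).toReal by simp]
  exact ENNReal.toReal_mono (measure_ne_top _ _) (measure_mono (subset_univ _))

lemma leftQuantile_eq_sInf (u : ℝ) :
    leftQuantile μ X u = sInf {x : ℝ | u ≤ rcdf μ X x} := rfl

lemma tendsto_rcdf_atTop (hm : Measurable X) :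
    Tendsto (rcdf μ X) atTop (𝓝 1) := by
  have h1 : Tendsto (fun x : ℝ => μ {ω | X ω ≤ x}) atTop (𝓝 (μ (⋃ x : ℝ, {ω | X ω ≤ x}))) := by
    refine tendsto_measure_iUnion_atTop (fun x y hxy => ?_)
    exact fun ω hω => le_trans hω hxy
  have hU : (⋃ x : ℝ, {ω | X ω ≤ x}) = Set.univ := by
    ext ω; simp only [Set.mem_iUnion, Set.mem_univ, iff_true]
    exact ⟨X ω, by simp⟩
  rw [hU, measure_univ] at h1
  have := (ENNReal.tendsto_toReal (by norm_num)).comp h1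
  have h2 : Tendsto (fun x => (μ {ω | X ω ≤ x}).toReal) atTop (𝓝 1) := by
    simpa [Function.comp_def] using this
  exact h2

lemma tendsto_rcdf_atBot (hm : Measurable X) :
    Tendsto (rcdf μ X) atBot (𝓝 0) := by
  have h1 : Tendsto (fun x : ℝ => μ {ω | X ω ≤ x}) atBot (𝓝 (μ (⋂ x : ℝ, {ω | X ω ≤ x}))) := by
    refine tendsto_measure_iInter_atBot
      (fun x => (measurableSet_le hm measurable_const).nullMeasurableSet)
      (fun x y hxy ω hω => le_trans hω hxy) ⟨0, measure_ne_top _ _⟩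
  have hI : (⋂ x : ℝ, {ω | X ω ≤ x}) = ∅ := by
    ext ω; simp only [Set.mem_iInter, Set.mem_empty_iff_false, iff_false, not_forall]
    refine ⟨X ω - 1, ?_⟩
    simp only [Set.mem_setOf_eq]
    push_neg
    linarith
  rw [hI, measure_empty] at h1
  have := (ENNReal.tendsto_toReal (by norm_num)).comp h1
  have h2 : Tendsto (fun x => (μ {ω | X ω ≤ x}).toReal) atBot (𝓝 0) := by
    simpa [Function.comp_def] using this
  exact h2

lemma quantile_set_nonempty (hm : Measurable X) {u : ℝ} (hu1 : u < 1) :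
    {x : ℝ | u ≤ rcdf μ X x}.Nonempty := by
  have := (tendsto_rcdf_atTop (μ := μ) hm).eventually (eventually_ge_nhds hu1)
  rcases this.exists with ⟨x, hx⟩
  · exact ⟨x, hx⟩

lemma quantile_set_bddBelow (hm : Measurable X) {u : ℝ} (hu : 0 < u) :
    BddBelow {x : ℝ | u ≤ rcdf μ X x} := by
  have := (tendsto_rcdf_atBot (μ := μ) hm).eventually_lt_const hu
  rcases this.exists with ⟨x₀, hx₀⟩
  refine ⟨x₀, fun y hy => ?_⟩
  by_contra hc
  push_neg at hc
  exact absurd (le_trans hy (rcdf_mono hc.le)) (not_le.mpr hx₀)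

/-- The cdf at the left quantile is at least `u` (right-continuity). -/
lemma rcdf_leftQuantile (hm : Measurable X) {u : ℝ} (hu : 0 < u) (hu1 : u < 1) :
    u ≤ rcdf μ X (leftQuantile μ X u) := by
  set q := leftQuantile μ X u with hq
  have hne := quantile_set_nonempty (μ := μ) hm hu1
  have hbd := quantile_set_bddBelow (μ := μ) hm hu
  -- for every n, rcdf (q + 1/(n+1)) ≥ u
  have hstep : ∀ n : ℕ, u ≤ rcdf μ X (q + 1/(n+1)) := by
    intro n
    have hlt : q < q + 1/(n+1) := lt_add_of_pos_right _ (by positivity)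
    obtain ⟨y, hy, hylt⟩ := (csInf_lt_iff hbd hne).mp hlt
    exact le_trans hy (rcdf_mono hylt.le)
  -- measure continuity from above
  have h1 : Tendsto (fun n : ℕ => μ {ω | X ω ≤ q + 1/(n+1)}) atTop
      (𝓝 (μ (⋂ n : ℕ, {ω | X ω ≤ q + 1/(n+1)}))) := by
    refine tendsto_measure_iInter_atTop
      (fun n => (measurableSet_le hm measurable_const).nullMeasurableSet)
      (fun a b hab => ?_) ⟨0, measure_ne_top _ _⟩
    intro ω hω
    have h1ab : (1:ℝ)/(b+1) ≤ 1/(a+1) := by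
      apply one_div_le_one_div_of_le (by positivity)
      exact_mod_cast Nat.add_le_add_right hab 1
    simp only [Set.mem_setOf_eq] at hω ⊢
    linarith
  have hI : (⋂ n : ℕ, {ω | X ω ≤ q + 1/(n+1)}) = {ω | X ω ≤ q} := by
    ext ω
    simp only [Set.mem_iInter, Set.mem_setOf_eq]
    constructor
    · intro h
      by_contra hc
      push_neg at hc
      obtain ⟨n, hn⟩ := exists_nat_one_div_lt (sub_pos.mpr hc)
      exact absurd (h n) (by push_neg; linarith [hn])
    · intro h n; have : (0:ℝ) < 1/(n+1) := by positivity
      linarith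
  rw [hI] at h1
  have h2 : Tendsto (fun n : ℕ => rcdf μ X (q + 1/(n+1))) atTop (𝓝 (rcdf μ X q)) := by
    have := (ENNReal.tendsto_toReal (measure_ne_top μ _)).comp h1
    exact this
  exact ge_of_tendsto h2 (Eventually.of_forall hstep)

lemma leftQuantile_le_iff (hm : Measurable X) {u x : ℝ} (hu : 0 < u) (hu1 : u < 1) :
    leftQuantile μ X u ≤ x ↔ u ≤ rcdf μ X x := by
  constructor
  · intro h
    exact le_trans (rcdf_leftQuantile hm hu hu1) (rcdf_mono h)
  · intro h
    exact csInf_le (quantile_set_bddBelow hm hu) h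

lemma leftQuantile_mono (hm : Measurable X) {u v : ℝ} (hu : 0 < u) (huv : u ≤ v) (hv1 : v < 1) :
    leftQuantile μ X u ≤ leftQuantile μ X v := by
  refine csInf_le_csInf (quantile_set_bddBelow hm hu) (quantile_set_nonempty hm hv1) ?_
  exact fun x hx => le_trans huv hx

end Aux
section Push

variable {Ω : Type*} [MeasurableSpace Ω] {μ : Measure Ω} [IsProbabilityMeasure μ] {X : Ω → ℝ}

/-- Quantile function, set to `0` outside `(0,1)`, to make it globally measurable. -/
noncomputable def qfun (μ : Measure Ω) (X : Ω → ℝ) : ℝ → ℝ :=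
  fun u => if u ∈ Set.Ioo (0:ℝ) 1 then leftQuantile μ X u else 0

lemma qfun_eq {u : ℝ} (hu : u ∈ Set.Ioo (0:ℝ) 1) : qfun μ X u = leftQuantile μ X u := if_pos hu

lemma measurable_qfun (hm : Measurable X) : Measurable (qfun μ X) := by
  apply measurable_of_Iic
  intro x
  have hpre : qfun μ X ⁻¹' Set.Iic x =
      (Set.Ioo (0:ℝ) 1 ∩ Set.Iic (rcdf μ X x)) ∪ ((Set.Ioo (0:ℝ) 1)ᶜ ∩ {u : ℝ | (0:ℝ) ≤ x}) := by
    ext u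
    by_cases hu : u ∈ Set.Ioo (0:ℝ) 1
    · simp only [Set.mem_preimage, Set.mem_Iic, qfun_eq hu, Set.mem_union, Set.mem_inter_iff,
        hu, true_and, Set.mem_compl_iff, not_true, false_and, or_false]
      exact leftQuantile_le_iff hm hu.1 hu.2
    · simp only [Set.mem_preimage, Set.mem_Iic, qfun, if_neg hu, Set.mem_union, Set.mem_inter_iff,
        hu, false_and, false_or, Set.mem_compl_iff, not_false_iff, true_and, Set.mem_setOf_eq]
      norm_num
  rw [hpre]
  by_cases h0x : (0:ℝ) ≤ x
  · have h1 : {u : ℝ | (0:ℝ) ≤ x} = Set.univ := by ext u; simp [h0x]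
    rw [h1]
    exact (measurableSet_Ioo.inter measurableSet_Iic).union
      (measurableSet_Ioo.compl.inter MeasurableSet.univ)
  · have h1 : {u : ℝ | (0:ℝ) ≤ x} = ∅ := by ext u; simp [h0x]
    rw [h1]
    exact (measurableSet_Ioo.inter measurableSet_Iic).union
      (measurableSet_Ioo.compl.inter MeasurableSet.empty)

lemma map_qfun (hm : Measurable X) :
    Measure.map (qfun μ X) (volume.restrict (Set.Ioo (0:ℝ) 1)) = Measure.map X μ := by
  haveI hfin1 : IsFiniteMeasure (volume.restrict (Set.Ioo (0:ℝ) 1)) :=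
    ⟨by simp [Real.volume_Ioo]⟩
  haveI hfin2 : IsFiniteMeasure (Measure.map (qfun μ X) (volume.restrict (Set.Ioo (0:ℝ) 1))) :=
    Measure.isFiniteMeasure_map _ _
  refine Measure.ext_of_Iic _ _ (fun x => ?_)
  rw [Measure.map_apply (measurable_qfun hm) measurableSet_Iic,
    Measure.map_apply hm measurableSet_Iic,
    Measure.restrict_apply ((measurable_qfun hm) measurableSet_Iic)]
  have hF0 : 0 ≤ rcdf μ X x := rcdf_nonneg x
  have hF1 : rcdf μ X x ≤ 1 := rcdf_le_one x
  have hset : qfun μ X ⁻¹' Set.Iic x ∩ Set.Ioo 0 1 =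
      Set.Ioc 0 (rcdf μ X x) ∩ Set.Ioo 0 1 := by
    ext u
    simp only [Set.mem_inter_iff, Set.mem_preimage, Set.mem_Iic, Set.mem_Ioc, Set.mem_Ioo]
    constructor
    · rintro ⟨hq, hu⟩
      rw [qfun_eq hu] at hq
      exact ⟨⟨hu.1, (leftQuantile_le_iff hm hu.1 hu.2).mp hq⟩, hu⟩
    · rintro ⟨⟨hu0, hF⟩, hu⟩
      exact ⟨by rw [qfun_eq hu]; exact (leftQuantile_le_iff hm hu.1 hu.2).mpr hF, hu⟩
  rw [hset]
  have hXIic : X ⁻¹' Set.Iic x = {ω | X ω ≤ x} := rfl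
  rw [hXIic]
  have hmu : μ {ω | X ω ≤ x} = ENNReal.ofReal (rcdf μ X x) := by
    rw [rcdf, ENNReal.ofReal_toReal (measure_ne_top _ _)]
  rw [hmu]
  rcases lt_or_eq_of_le hF1 with hF1' | hF1'
  · have : Set.Ioc 0 (rcdf μ X x) ∩ Set.Ioo 0 1 = Set.Ioc 0 (rcdf μ X x) := by
      apply Set.inter_eq_self_of_subset_left
      intro u hu
      exact ⟨hu.1, lt_of_le_of_lt hu.2 hF1'⟩
    rw [this, Real.volume_Ioc]
    simp
  · have : Set.Ioc 0 (rcdf μ X x) ∩ Set.Ioo 0 1 = Set.Ioo 0 1 := by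
      apply Set.inter_eq_self_of_subset_right
      intro u hu
      exact ⟨hu.1, by rw [hF1']; exact hu.2.le⟩
    rw [this, hF1', Real.volume_Ioo]
    norm_num

/-- Transfer of integrals through the quantile transform. -/
lemma integral_comp_qfun (hm : Measurable X) (g : ℝ → ℝ) (hgc : Continuous g) :
    ∫ u in Set.Ioo (0:ℝ) 1, g (qfun μ X u) = ∫ ω, g (X ω) ∂μ := by
  rw [← integral_map hm.aemeasurable hgc.aestronglyMeasurable,
    ← map_qfun hm,
    integral_map (measurable_qfun hm).aemeasurable hgc.aestronglyMeasurable]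

lemma integrable_comp_qfun (hm : Measurable X) (g : ℝ → ℝ) (hgc : Continuous g)
    (hgi : Integrable (fun ω => g (X ω)) μ) :
    IntegrableOn (fun u => g (qfun μ X u)) (Set.Ioo (0:ℝ) 1) := by
  have h1 : Integrable g (Measure.map X μ) :=
    (integrable_map_measure hgc.aestronglyMeasurable hm.aemeasurable).mpr hgi
  rw [← map_qfun hm] at h1
  exact (integrable_map_measure hgc.aestronglyMeasurable
    (measurable_qfun hm).aemeasurable).mp h1

lemma integrable_qfun (hm : Measurable X) (hi : Integrable X μ) :
    IntegrableOn (qfun μ X) (Set.Ioo (0:ℝ) 1) := by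
  have := integrable_comp_qfun (μ := μ) hm id continuous_id hi
  simpa using this

end Push
section HL

variable {Ω : Type*} [MeasurableSpace Ω] {μ : Measure Ω} [IsProbabilityMeasure μ] {X : Ω → ℝ}

lemma integrableOn_leftQuantile (hm : Measurable X) (hi : Integrable X μ) {a b : ℝ}
    (h : Set.Ioo a b ⊆ Set.Ioo 0 1) :
    IntegrableOn (leftQuantile μ X) (Set.Ioo a b) volume := by
  refine (((integrable_qfun hm hi).mono_set h).congr_fun ?_ measurableSet_Ioo)
  exact fun u hu => qfun_eq (h hu)

/-- Lower tail integral of the positive part `(t - X)⁺` where `t` is the `β`-quantile. -/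
lemma integral_neg_part (hm : Measurable X) (hi : Integrable X μ) {β : ℝ}
    (hβ : β ∈ Set.Ioo (0:ℝ) 1) :
    ∫ ω, max (leftQuantile μ X β - X ω) 0 ∂μ
      = ∫ u in Set.Ioo (0:ℝ) β, (leftQuantile μ X β - leftQuantile μ X u) := by
  set t := leftQuantile μ X β with ht
  have hg : Continuous (fun y : ℝ => max (t - y) 0) := by fun_prop
  have h1 := integral_comp_qfun (μ := μ) hm (fun y => max (t - y) 0) hg
  have hint : IntegrableOn (fun u => max (t - qfun μ X u) 0) (Set.Ioo (0:ℝ) 1) volume :=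
    integrable_comp_qfun hm (fun y => max (t - y) 0) hg (((integrable_const t).sub hi).pos_part)
  have hsplit : Set.Ioo (0:ℝ) 1 = Set.Ioo (0:ℝ) β ∪ Set.Ico β 1 :=
    (Set.Ioo_union_Ico_eq_Ioo hβ.1 hβ.2.le).symm
  have hdisj : Disjoint (Set.Ioo (0:ℝ) β) (Set.Ico β 1) := by
    refine Set.disjoint_left.mpr (fun u hu hu' => absurd hu.2 (not_lt.mpr hu'.1))
  have h2 : ∫ u in Set.Ioo (0:ℝ) 1, max (t - qfun μ X u) 0
      = (∫ u in Set.Ioo (0:ℝ) β, max (t - qfun μ X u) 0)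
        + ∫ u in Set.Ico β 1, max (t - qfun μ X u) 0 := by
    rw [hsplit] at hint ⊢
    exact setIntegral_union hdisj measurableSet_Ico
      (hint.mono_set Set.subset_union_left) (hint.mono_set Set.subset_union_right)
  have h3 : ∫ u in Set.Ico β 1, max (t - qfun μ X u) 0 = 0 := by
    rw [setIntegral_congr_fun measurableSet_Ico (g := fun _ => (0:ℝ))]
    · simp
    · intro u hu
      have hu1 : u ∈ Set.Ioo (0:ℝ) 1 := ⟨lt_of_lt_of_le hβ.1 hu.1, hu.2⟩
      have h5 : t ≤ leftQuantile μ X u := leftQuantile_mono hm hβ.1 hu.1 hu1.2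
      have hqe : qfun μ X u = leftQuantile μ X u := qfun_eq hu1
      simp only [hqe]
      exact max_eq_right (by linarith)
  have h4 : ∫ u in Set.Ioo (0:ℝ) β, max (t - qfun μ X u) 0
      = ∫ u in Set.Ioo (0:ℝ) β, (t - leftQuantile μ X u) := by
    refine setIntegral_congr_fun measurableSet_Ioo (fun u hu => ?_)
    have hu1 : u ∈ Set.Ioo (0:ℝ) 1 := ⟨hu.1, lt_trans hu.2 hβ.2⟩
    have h5 : leftQuantile μ X u ≤ t := leftQuantile_mono hm hu1.1 hu.2.le hβ.2
    have hqe : qfun μ X u = leftQuantile μ X u := qfun_eq hu1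
    simp only [hqe]
    exact max_eq_left (by linarith)
  rw [← h1, h2, h3, h4, add_zero]

/-- Upper tail integral of the positive part `(X - t)⁺` where `t` is the `β`-quantile. -/
lemma integral_pos_part (hm : Measurable X) (hi : Integrable X μ) {β : ℝ}
    (hβ : β ∈ Set.Ioo (0:ℝ) 1) :
    ∫ ω, max (X ω - leftQuantile μ X β) 0 ∂μ
      = ∫ u in Set.Ioo β 1, (leftQuantile μ X u - leftQuantile μ X β) := by
  set t := leftQuantile μ X β with ht
  have hg : Continuous (fun y : ℝ => max (y - t) 0) := by fun_prop
  have h1 := integral_comp_qfun (μ := μ) hm (fun y => max (y - t) 0) hg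
  have hint : IntegrableOn (fun u => max (qfun μ X u - t) 0) (Set.Ioo (0:ℝ) 1) volume :=
    integrable_comp_qfun hm (fun y => max (y - t) 0) hg ((hi.sub (integrable_const t)).pos_part)
  have hsplit : Set.Ioo (0:ℝ) 1 = Set.Ioc (0:ℝ) β ∪ Set.Ioo β 1 :=
    (Set.Ioc_union_Ioo_eq_Ioo hβ.1.le hβ.2).symm
  have hdisj : Disjoint (Set.Ioc (0:ℝ) β) (Set.Ioo β 1) := by
    refine Set.disjoint_left.mpr (fun u hu hu' => absurd hu.2 (not_le.mpr hu'.1))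
  have h2 : ∫ u in Set.Ioo (0:ℝ) 1, max (qfun μ X u - t) 0
      = (∫ u in Set.Ioc (0:ℝ) β, max (qfun μ X u - t) 0)
        + ∫ u in Set.Ioo β 1, max (qfun μ X u - t) 0 := by
    rw [hsplit] at hint ⊢
    exact setIntegral_union hdisj measurableSet_Ioo
      (hint.mono_set Set.subset_union_left) (hint.mono_set Set.subset_union_right)
  have h3 : ∫ u in Set.Ioc (0:ℝ) β, max (qfun μ X u - t) 0 = 0 := by
    rw [setIntegral_congr_fun measurableSet_Ioc (g := fun _ => (0:ℝ))]
    · simp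
    · intro u hu
      have hu1 : u ∈ Set.Ioo (0:ℝ) 1 := ⟨hu.1, lt_of_le_of_lt hu.2 hβ.2⟩
      have h5 : leftQuantile μ X u ≤ t := leftQuantile_mono hm hu.1 hu.2 hβ.2
      have hqe : qfun μ X u = leftQuantile μ X u := qfun_eq hu1
      simp only [hqe]
      exact max_eq_right (by linarith)
  have h4 : ∫ u in Set.Ioo β 1, max (qfun μ X u - t) 0
      = ∫ u in Set.Ioo β 1, (leftQuantile μ X u - t) := by
    refine setIntegral_congr_fun measurableSet_Ioo (fun u hu => ?_)
    have hu1 : u ∈ Set.Ioo (0:ℝ) 1 := ⟨lt_trans hβ.1 hu.1, hu.2⟩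
    have h5 : t ≤ leftQuantile μ X u := leftQuantile_mono hm hβ.1 hu.1.le hu.2
    have hqe : qfun μ X u = leftQuantile μ X u := qfun_eq hu1
    simp only [hqe]
    exact max_eq_left (by linarith)
  rw [← h1, h2, h3, h4, zero_add]

lemma integrable_of_le_one {ψ : Ω → ℝ} (hψm : Measurable ψ) (h0 : ∀ ω, 0 ≤ ψ ω)
    (h1 : ∀ ω, ψ ω ≤ 1) : Integrable ψ μ := by
  refine (integrable_const (1:ℝ)).mono' hψm.aestronglyMeasurable ?_
  refine Eventually.of_forall (fun ω => ?_)
  rw [Real.norm_eq_abs, abs_le]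
  exact ⟨by linarith [h0 ω], h1 ω⟩

lemma integrable_mul_of_le_one (hi : Integrable X μ) {ψ : Ω → ℝ} (hψm : Measurable ψ)
    (h0 : ∀ ω, 0 ≤ ψ ω) (h1 : ∀ ω, ψ ω ≤ 1) :
    Integrable (fun ω => X ω * ψ ω) μ := by
  have := hi.bdd_mul (c := 1) hψm.aestronglyMeasurable
    (Eventually.of_forall (fun ω => by rw [Real.norm_eq_abs, abs_le]; exact ⟨by linarith [h0 ω], h1 ω⟩))
  simpa [mul_comm] using this

/-- Hardy–Littlewood upper bound. -/
lemma HL_upper (hm : Measurable X) (hi : Integrable X μ) {ψ : Ω → ℝ} (hψm : Measurable ψ)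
    (h0 : ∀ ω, 0 ≤ ψ ω) (h1 : ∀ ω, ψ ω ≤ 1) {β : ℝ} (hβ : β ∈ Set.Ioo (0:ℝ) 1)
    (hEψ : ∫ ω, ψ ω ∂μ = β) :
    ∫ ω, X ω * ψ ω ∂μ ≤ ∫ u in Set.Ioo (1-β) 1, leftQuantile μ X u := by
  have hβ' : 1 - β ∈ Set.Ioo (0:ℝ) 1 := ⟨by linarith [hβ.2], by linarith [hβ.1]⟩
  set t := leftQuantile μ X (1-β) with ht
  have hψint : Integrable ψ μ := integrable_of_le_one hψm h0 h1
  have hpp : Integrable (fun ω => max (X ω - t) 0) μ := (hi.sub (integrable_const t)).pos_part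
  have hpt : ∫ ω, max (X ω - t) 0 ∂μ = ∫ u in Set.Ioo (1-β) 1, (leftQuantile μ X u - t) :=
    integral_pos_part hm hi hβ'
  have step1 : ∫ ω, X ω * ψ ω ∂μ ≤ ∫ ω, (t * ψ ω + max (X ω - t) 0) ∂μ := by
    refine integral_mono (integrable_mul_of_le_one hi hψm h0 h1)
      ((hψint.const_mul t).add hpp) (fun ω => ?_)
    rcases le_or_gt t (X ω) with hc | hc
    · have : (X ω - t) * ψ ω ≤ (X ω - t) * 1 := by
        apply mul_le_mul_of_nonneg_left (h1 ω) (by linarith)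
      have hmx : max (X ω - t) 0 = X ω - t := max_eq_left (by linarith)
      nlinarith
    · have : (X ω - t) * ψ ω ≤ 0 := mul_nonpos_of_nonpos_of_nonneg (by linarith) (h0 ω)
      have hmx : 0 ≤ max (X ω - t) 0 := le_max_right _ _
      nlinarith
  have step2 : ∫ ω, (t * ψ ω + max (X ω - t) 0) ∂μ
      = t * β + ∫ u in Set.Ioo (1-β) 1, (leftQuantile μ X u - t) := by
    rw [integral_add (hψint.const_mul t) hpp, integral_const_mul, hEψ, hpt]
  have hqi : IntegrableOn (leftQuantile μ X) (Set.Ioo (1-β) 1) volume :=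
    integrableOn_leftQuantile hm hi (Set.Ioo_subset_Ioo hβ'.1.le le_rfl)
  have step3 : ∫ u in Set.Ioo (1-β) 1, (leftQuantile μ X u - t)
      = (∫ u in Set.Ioo (1-β) 1, leftQuantile μ X u) - t * β := by
    rw [integral_sub hqi ((integrableOn_const_iff).mpr (Or.inr (by rw [Real.volume_Ioo]; exact ENNReal.ofReal_lt_top)))]
    rw [setIntegral_const, measureReal_def, Real.volume_Ioo, smul_eq_mul]
    rw [ENNReal.toReal_ofReal (by linarith [hβ.1])]
    ring
  calc ∫ ω, X ω * ψ ω ∂μ ≤ t * β + ∫ u in Set.Ioo (1-β) 1, (leftQuantile μ X u - t) := by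
        rw [← step2]; exact step1
    _ = ∫ u in Set.Ioo (1-β) 1, leftQuantile μ X u := by rw [step3]; ring

/-- Hardy–Littlewood lower bound. -/
lemma HL_lower (hm : Measurable X) (hi : Integrable X μ) {ψ : Ω → ℝ} (hψm : Measurable ψ)
    (h0 : ∀ ω, 0 ≤ ψ ω) (h1 : ∀ ω, ψ ω ≤ 1) {β : ℝ} (hβ0 : 0 < β) (hβ1 : β ≤ 1)
    (hEψ : ∫ ω, ψ ω ∂μ = β) :
    ∫ u in Set.Ioo (0:ℝ) β, leftQuantile μ X u ≤ ∫ ω, X ω * ψ ω ∂μ := by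
  have hψint : Integrable ψ μ := integrable_of_le_one hψm h0 h1
  rcases eq_or_lt_of_le hβ1 with hβ1' | hβ1'
  · -- β = 1 : ψ = 1 a.e.
    have hae : ψ =ᵐ[μ] (fun _ => 1) := by
      have hz : ∫ ω, (1 - ψ ω) ∂μ = 0 := by
        rw [integral_sub (integrable_const 1) hψint, hEψ]
        simp [hβ1']
      have := (integral_eq_zero_iff_of_nonneg_ae
        (Eventually.of_forall (fun ω => by simp; linarith [h1 ω]))
        ((integrable_const (1:ℝ)).sub hψint)).mp hz
      filter_upwards [this] with ω hω
      have : 1 - ψ ω = 0 := hω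
      linarith
    have h2 : ∫ ω, X ω * ψ ω ∂μ = ∫ ω, X ω ∂μ := by
      refine integral_congr_ae ?_
      filter_upwards [hae] with ω hω
      rw [hω, mul_one]
    have h3 : ∫ u in Set.Ioo (0:ℝ) β, leftQuantile μ X u = ∫ ω, X ω ∂μ := by
      have := integral_comp_qfun (μ := μ) hm id continuous_id
      simp only [id] at this
      rw [hβ1']
      rw [← this]
      refine setIntegral_congr_fun measurableSet_Ioo (fun u hu => (qfun_eq hu).symm)
    rw [h2, h3]
  · -- β < 1
    have hβ : β ∈ Set.Ioo (0:ℝ) 1 := ⟨hβ0, hβ1'⟩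
    set t := leftQuantile μ X β with ht
    have hpp : Integrable (fun ω => max (t - X ω) 0) μ := ((integrable_const t).sub hi).pos_part
    have hpt : ∫ ω, max (t - X ω) 0 ∂μ = ∫ u in Set.Ioo (0:ℝ) β, (t - leftQuantile μ X u) :=
      integral_neg_part hm hi hβ
    have step1 : ∫ ω, (t * ψ ω - max (t - X ω) 0) ∂μ ≤ ∫ ω, X ω * ψ ω ∂μ := by
      refine integral_mono ((hψint.const_mul t).sub hpp)
        (integrable_mul_of_le_one hi hψm h0 h1) (fun ω => ?_)
      rcases le_or_gt t (X ω) with hc | hc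
      · have h5 : 0 ≤ (X ω - t) * ψ ω := mul_nonneg (by linarith) (h0 ω)
        have hmx : 0 ≤ max (t - X ω) 0 := le_max_right _ _
        nlinarith
      · have h5 : (t - X ω) * ψ ω ≤ (t - X ω) * 1 :=
          mul_le_mul_of_nonneg_left (h1 ω) (by linarith)
        have hmx : max (t - X ω) 0 = t - X ω := max_eq_left (by linarith)
        nlinarith
    have step2 : ∫ ω, (t * ψ ω - max (t - X ω) 0) ∂μ
        = t * β - ∫ u in Set.Ioo (0:ℝ) β, (t - leftQuantile μ X u) := by
      rw [integral_sub (hψint.const_mul t) hpp, integral_const_mul, hEψ, hpt]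
    have hqi : IntegrableOn (leftQuantile μ X) (Set.Ioo (0:ℝ) β) volume :=
      integrableOn_leftQuantile hm hi (Set.Ioo_subset_Ioo le_rfl hβ.2.le)
    have step3 : ∫ u in Set.Ioo (0:ℝ) β, (t - leftQuantile μ X u)
        = t * β - ∫ u in Set.Ioo (0:ℝ) β, leftQuantile μ X u := by
      rw [integral_sub ((integrableOn_const_iff (C := t)).mpr (Or.inr (by rw [Real.volume_Ioo]; exact ENNReal.ofReal_lt_top))) hqi]
      rw [setIntegral_const, measureReal_def, Real.volume_Ioo, smul_eq_mul]
      rw [ENNReal.toReal_ofReal (by linarith)]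
      ring
    calc ∫ u in Set.Ioo (0:ℝ) β, leftQuantile μ X u
        = t * β - ∫ u in Set.Ioo (0:ℝ) β, (t - leftQuantile μ X u) := by rw [step3]; ring
      _ = ∫ ω, (t * ψ ω - max (t - X ω) 0) ∂μ := step2.symm
      _ ≤ ∫ ω, X ω * ψ ω ∂μ := step1

end HL
section Minimizer

variable {Ω : Type*} [MeasurableSpace Ω] {μ : Measure Ω} [IsProbabilityMeasure μ] {X : Ω → ℝ}

lemma measure_lt_quantile_le (hm : Measurable X) {α : ℝ} (hα : α ∈ Set.Ioo (0:ℝ) 1) :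
    (μ {ω | X ω < leftQuantile μ X α}).toReal ≤ α := by
  set t := leftQuantile μ X α with htdef
  have hstep : ∀ n : ℕ, rcdf μ X (t - 1/(n+1)) ≤ α := by
    intro n
    by_contra hc
    push_neg at hc
    have hmem : (t - 1/(n+1)) ∈ {x : ℝ | α ≤ rcdf μ X x} := le_of_lt hc
    have := csInf_le (quantile_set_bddBelow hm hα.1) hmem
    have hpos : (0:ℝ) < 1/(n+1) := by positivity
    rw [leftQuantile_eq_sInf] at htdef
    have : t ≤ t - 1/(n+1) := htdef ▸ this
    linarith
  have hU : {ω | X ω < t} = ⋃ n : ℕ, {ω | X ω ≤ t - 1/(n+1)} := by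
    ext ω
    simp only [Set.mem_setOf_eq, Set.mem_iUnion]
    constructor
    · intro h
      obtain ⟨n, hn⟩ := exists_nat_one_div_lt (sub_pos.mpr h)
      exact ⟨n, by linarith⟩
    · rintro ⟨n, hn⟩
      have : (0:ℝ) < 1/(n+1) := by positivity
      linarith
  have h1 : Tendsto (fun n : ℕ => μ {ω | X ω ≤ t - 1/(n+1)}) atTop
      (𝓝 (μ (⋃ n : ℕ, {ω | X ω ≤ t - 1/(n+1)}))) := by
    refine tendsto_measure_iUnion_atTop (fun a b hab => ?_)
    intro ω hω
    have h1ab : (1:ℝ)/(b+1) ≤ 1/(a+1) := by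
      apply one_div_le_one_div_of_le (by positivity)
      exact_mod_cast Nat.add_le_add_right hab 1
    simp only [Set.mem_setOf_eq] at hω ⊢
    linarith
  rw [← hU] at h1
  have h2 : Tendsto (fun n : ℕ => rcdf μ X (t - 1/(n+1))) atTop
      (𝓝 ((μ {ω | X ω < t}).toReal)) :=
    (ENNReal.tendsto_toReal (measure_ne_top μ _)).comp h1
  exact le_of_tendsto h2 (Eventually.of_forall hstep)

lemma exists_minimizer (hm : Measurable X) (hi : Integrable X μ) {α : ℝ}
    (hα : α ∈ Set.Ioo (0:ℝ) 1) :
    ∃ φ : Ω → ℝ, Measurable φ ∧ (∀ ω, 0 ≤ φ ω) ∧ (∀ ω, φ ω ≤ 1) ∧ (∫ ω, φ ω ∂μ = α) ∧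
      ∫ ω, X ω * φ ω ∂μ = ∫ u in Set.Ioo (0:ℝ) α, leftQuantile μ X u := by
  set t := leftQuantile μ X α with htdef
  set p := (μ {ω | X ω < t}).toReal with hpdef
  set r := (μ {ω | X ω = t}).toReal with hrdef
  have hp0 : 0 ≤ p := ENNReal.toReal_nonneg
  have hr0 : 0 ≤ r := ENNReal.toReal_nonneg
  have hple : p ≤ α := measure_lt_quantile_le hm hα
  have hdis : Disjoint {ω | X ω < t} {ω | X ω = t} := by
    refine Set.disjoint_left.mpr (fun ω hω hω' => ?_)
    simp only [Set.mem_setOf_eq] at hω hω'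
    rw [hω'] at hω
    exact lt_irrefl _ hω
  have hU : {ω | X ω < t} ∪ {ω | X ω = t} = {ω | X ω ≤ t} := by
    ext ω
    simp only [Set.mem_union, Set.mem_setOf_eq]
    constructor
    · rintro (h | h)
      · exact h.le
      · exact h.le
    · intro h
      exact h.lt_or_eq
  have hmeq : μ {ω | X ω ≤ t} = μ {ω | X ω < t} + μ {ω | X ω = t} := by
    rw [← hU]
    exact measure_union hdis (hm (measurableSet_singleton t))
  have hpr : p + r = rcdf μ X t := by
    show p + r = (μ {ω | X ω ≤ t}).toReal
    rw [hmeq, ENNReal.toReal_add (measure_ne_top _ _) (measure_ne_top _ _)]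
  have hαpr : α ≤ p + r := by rw [hpr]; exact rcdf_leftQuantile hm hα.1 hα.2
  -- the weight on the atom
  set c : ℝ := if r = 0 then 0 else (α - p)/r with hcdef
  have hc0 : 0 ≤ c := by
    rw [hcdef]; split_ifs with h
    · exact le_refl 0
    · exact div_nonneg (by linarith) hr0
  have hc1 : c ≤ 1 := by
    rw [hcdef]; split_ifs with h
    · linarith
    · have hr0' : 0 < r := lt_of_le_of_ne hr0 (Ne.symm h)
      rw [div_le_one hr0']
      linarith
  have hcr : p + c * r = α := by
    rw [hcdef]; split_ifs with h
    · have hpα : p = α := le_antisymm hple (by rw [h] at hαpr; linarith)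
      rw [zero_mul, add_zero, hpα]
    · field_simp
      ring
  set φ : Ω → ℝ := fun ω => if X ω < t then 1 else if X ω = t then c else 0 with hφdef
  have hφm : Measurable φ := by
    refine Measurable.ite (measurableSet_lt hm measurable_const) measurable_const ?_
    exact Measurable.ite (hm (measurableSet_singleton t)) measurable_const measurable_const
  have hφ0 : ∀ ω, 0 ≤ φ ω := by
    intro ω; rw [hφdef]; dsimp only; split_ifs
    all_goals first | exact hc0 | norm_num
  have hφ1 : ∀ ω, φ ω ≤ 1 := by
    intro ω; rw [hφdef]; dsimp only; split_ifs
    all_goals first | exact hc1 | norm_num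
  have hφint : Integrable φ μ := integrable_of_le_one hφm hφ0 hφ1
  have hφeq : φ = fun ω => Set.indicator {ω | X ω < t} (fun _ => (1:ℝ)) ω
      + Set.indicator {ω | X ω = t} (fun _ => c) ω := by
    funext ω
    rw [hφdef]
    dsimp only
    by_cases h1 : X ω < t
    · rw [if_pos h1, Set.indicator_of_mem (show ω ∈ {ω | X ω < t} from h1),
        Set.indicator_of_notMem (show ω ∉ {ω | X ω = t} from ne_of_lt h1)]
      norm_num
    · rw [if_neg h1, Set.indicator_of_notMem (show ω ∉ {ω | X ω < t} from h1)]
      by_cases h2 : X ω = t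
      · rw [if_pos h2, Set.indicator_of_mem (show ω ∈ {ω | X ω = t} from h2)]
        norm_num
      · rw [if_neg h2, Set.indicator_of_notMem (show ω ∉ {ω | X ω = t} from h2)]
        norm_num
  have hEφ : ∫ ω, φ ω ∂μ = α := by
    have hms1 : MeasurableSet {ω | X ω < t} := measurableSet_lt hm measurable_const
    have hms2 : MeasurableSet {ω | X ω = t} := hm (measurableSet_singleton t)
    rw [hφeq, integral_add ((integrable_const (1:ℝ)).indicator hms1)
      ((integrable_const c).indicator hms2),
      integral_indicator_const (1:ℝ) hms1, integral_indicator_const c hms2]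
    simp only [smul_eq_mul, mul_one]
    rw [measureReal_def, measureReal_def, ← hpdef, ← hrdef, ← hcr]
    ring
  refine ⟨φ, hφm, hφ0, hφ1, hEφ, ?_⟩
  have hXφ : ∀ ω, X ω * φ ω = t * φ ω - max (t - X ω) 0 := by
    intro ω
    rw [hφdef]; dsimp only
    by_cases h1 : X ω < t
    · rw [if_pos h1, max_eq_left (by linarith)]
      ring
    · push_neg at h1
      have hmx : max (t - X ω) 0 = 0 := max_eq_right (by linarith)
      rw [hmx]
      by_cases h2 : X ω = t
      · rw [if_neg (by push_neg; linarith), if_pos h2, h2]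
        ring
      · rw [if_neg (by push_neg; linarith), if_neg h2]
        ring
  have hpp : Integrable (fun ω => max (t - X ω) 0) μ := ((integrable_const t).sub hi).pos_part
  have h6 : ∫ ω, X ω * φ ω ∂μ = t * α - ∫ ω, max (t - X ω) 0 ∂μ := by
    rw [integral_congr_ae (Eventually.of_forall hXφ),
      integral_sub (hφint.const_mul t) hpp, integral_const_mul, hEφ]
  rw [h6, integral_neg_part hm hi hα]
  have hqi : IntegrableOn (leftQuantile μ X) (Set.Ioo (0:ℝ) α) volume :=
    integrableOn_leftQuantile hm hi (Set.Ioo_subset_Ioo le_rfl hα.2.le)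
  rw [integral_sub ((integrableOn_const_iff (C := t)).mpr (Or.inr (by rw [Real.volume_Ioo]; exact ENNReal.ofReal_lt_top))) hqi]
  rw [setIntegral_const, measureReal_def, Real.volume_Ioo, smul_eq_mul,
    ENNReal.toReal_ofReal (by linarith [hα.1])]
  ring

end Minimizer
section Core

variable {Ω : Type*} [MeasurableSpace Ω] {μ : Measure Ω} [IsProbabilityMeasure μ]

lemma core_ineq {Y₁ Y₂ : Ω → ℝ} (hm₁ : Measurable Y₁) (hm₂ : Measurable Y₂)
    (hi₁ : Integrable Y₁ μ) (hi₂ : Integrable Y₂ μ)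
    {s α₁ α₂ : ℝ} (hs : 0 < s) (hs1 : s ≤ 1)
    (hα₁ : α₁ ∈ Set.Ioo (0 : ℝ) 1) (hα₂ : α₂ ∈ Set.Ioo (0 : ℝ) 1) (hsum : α₁ + α₂ = s) :
    ∫ u in Set.Ioo (0:ℝ) s, leftQuantile μ (fun ω => Y₁ ω + Y₂ ω) u
      ≤ ((∫ u in Set.Ioo (0:ℝ) α₁, leftQuantile μ Y₁ u)
          + ∫ u in Set.Ioo (1-s+α₁) 1, leftQuantile μ Y₁ u)
        + ((∫ u in Set.Ioo (0:ℝ) α₂, leftQuantile μ Y₂ u)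
          + ∫ u in Set.Ioo (1-s+α₂) 1, leftQuantile μ Y₂ u) := by
  obtain ⟨φ₁, hφ₁m, hφ₁0, hφ₁1, hEφ₁, hXφ₁⟩ := exists_minimizer hm₁ hi₁ hα₁
  obtain ⟨φ₂, hφ₂m, hφ₂0, hφ₂1, hEφ₂, hXφ₂⟩ := exists_minimizer hm₂ hi₂ hα₂
  set m : Ω → ℝ := fun ω => max (φ₁ ω) (φ₂ ω) with hmdef
  have hmm : Measurable m := hφ₁m.max hφ₂m
  have hm0 : ∀ ω, 0 ≤ m ω := fun ω => le_trans (hφ₁0 ω) (le_max_left _ _)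
  have hm1 : ∀ ω, m ω ≤ 1 := fun ω => max_le (hφ₁1 ω) (hφ₂1 ω)
  have hmint : Integrable m μ := integrable_of_le_one hmm hm0 hm1
  set Em := ∫ ω, m ω ∂μ with hEmdef
  have hEm_le : Em ≤ s := by
    have h1 : ∫ ω, m ω ∂μ ≤ ∫ ω, (φ₁ ω + φ₂ ω) ∂μ := by
      refine integral_mono hmint (integrable_of_le_one hφ₁m hφ₁0 hφ₁1
        |>.add (integrable_of_le_one hφ₂m hφ₂0 hφ₂1)) (fun ω => ?_)
      exact max_le (le_add_of_nonneg_right (hφ₂0 ω)) (le_add_of_nonneg_left (hφ₁0 ω))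
    rw [integral_add (integrable_of_le_one hφ₁m hφ₁0 hφ₁1)
      (integrable_of_le_one hφ₂m hφ₂0 hφ₂1), hEφ₁, hEφ₂, hsum] at h1
    exact h1
  have hEm1 : Em ≤ 1 := by
    have : ∫ ω, m ω ∂μ ≤ ∫ _ω, (1:ℝ) ∂μ := integral_mono hmint (integrable_const 1)
      (fun ω => hm1 ω)
    simpa using this
  set c : ℝ := (s - Em)/(1 - Em) with hcdef
  have hc0 : 0 ≤ c := by
    rcases eq_or_lt_of_le hEm1 with h | h
    · rw [hcdef, h]
      simp
    · exact div_nonneg (by linarith) (by linarith)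
  have hc1 : c ≤ 1 := by
    rcases eq_or_lt_of_le hEm1 with h | h
    · rw [hcdef, h]
      norm_num
    · rw [hcdef, div_le_one (by linarith)]
      linarith
  set φ : Ω → ℝ := fun ω => m ω + c * (1 - m ω) with hφdef
  have hφm : Measurable φ := by
    apply Measurable.add hmm
    exact (measurable_const.sub hmm).const_mul c
  have hφ0 : ∀ ω, 0 ≤ φ ω := fun ω => by
    have := hm0 ω; have := hm1 ω
    have : 0 ≤ c * (1 - m ω) := mul_nonneg hc0 (by linarith)
    simp only [hφdef]
    linarith [hm0 ω]
  have hφ1 : ∀ ω, φ ω ≤ 1 := fun ω => by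
    have h1 := hm1 ω
    have h2 : c * (1 - m ω) ≤ 1 * (1 - m ω) := mul_le_mul_of_nonneg_right hc1 (by linarith)
    simp only [hφdef]
    linarith
  have hφge : ∀ ω, m ω ≤ φ ω := fun ω => by
    have : 0 ≤ c * (1 - m ω) := mul_nonneg hc0 (by linarith [hm1 ω])
    simp only [hφdef]
    linarith
  have hEφ : ∫ ω, φ ω ∂μ = s := by
    have e0 : Integrable (fun ω => (1:ℝ) - m ω) μ := (integrable_const 1).sub hmint
    have e1 : Integrable (fun ω => c * (1 - m ω)) μ := e0.const_mul c
    have h1 : ∫ ω, φ ω ∂μ = Em + c * (1 - Em) := by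
      rw [hφdef]
      rw [integral_add hmint e1, integral_const_mul, integral_sub (integrable_const 1) hmint]
      simp [hEmdef]
    rcases eq_or_lt_of_le hEm1 with h | h
    · have hs1' : s = 1 := le_antisymm hs1 (h ▸ hEm_le : (1:ℝ) ≤ s)
      rw [h1, h, hs1']
      norm_num
    · rw [h1, hcdef, div_mul_cancel₀ _ (by linarith : (1:ℝ) - Em ≠ 0)]
      ring
  -- ψ i := φ - φ i
  have hψprop : ∀ (φi : Ω → ℝ), Measurable φi → (∀ ω, 0 ≤ φi ω) → (∀ ω, φi ω ≤ 1) →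
      (∀ ω, φi ω ≤ m ω) → (∫ ω, φi ω ∂μ = α₁ ∨ True) →
      Measurable (fun ω => φ ω - φi ω) ∧ (∀ ω, 0 ≤ φ ω - φi ω) ∧ (∀ ω, φ ω - φi ω ≤ 1) := by
    intro φi hmi h0i h1i hlei _
    refine ⟨hφm.sub hmi, fun ω => by linarith [hφge ω, hlei ω], fun ω => by
      linarith [hφ1 ω, h0i ω]⟩
  obtain ⟨hψ₁m, hψ₁0, hψ₁1⟩ := hψprop φ₁ hφ₁m hφ₁0 hφ₁1 (fun ω => le_max_left _ _) (Or.inr trivial)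
  obtain ⟨hψ₂m, hψ₂0, hψ₂1⟩ := hψprop φ₂ hφ₂m hφ₂0 hφ₂1 (fun ω => le_max_right _ _) (Or.inr trivial)
  have hEψ₁ : ∫ ω, (φ ω - φ₁ ω) ∂μ = α₂ := by
    rw [integral_sub (integrable_of_le_one hφm hφ0 hφ1) (integrable_of_le_one hφ₁m hφ₁0 hφ₁1),
      hEφ, hEφ₁]
    linarith
  have hEψ₂ : ∫ ω, (φ ω - φ₂ ω) ∂μ = α₁ := by
    rw [integral_sub (integrable_of_le_one hφm hφ0 hφ1) (integrable_of_le_one hφ₂m hφ₂0 hφ₂1),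
      hEφ, hEφ₂]
    linarith
  -- the sum
  have hmS : Measurable (fun ω => Y₁ ω + Y₂ ω) := hm₁.add hm₂
  have hiS : Integrable (fun ω => Y₁ ω + Y₂ ω) μ := hi₁.add hi₂
  have hlow : ∫ u in Set.Ioo (0:ℝ) s, leftQuantile μ (fun ω => Y₁ ω + Y₂ ω) u
      ≤ ∫ ω, (Y₁ ω + Y₂ ω) * φ ω ∂μ :=
    HL_lower hmS hiS hφm hφ0 hφ1 hs hs1 hEφ
  have hsplitS : ∫ ω, (Y₁ ω + Y₂ ω) * φ ω ∂μ
      = (∫ ω, Y₁ ω * φ ω ∂μ) + ∫ ω, Y₂ ω * φ ω ∂μ := by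
    rw [← integral_add (integrable_mul_of_le_one hi₁ hφm hφ0 hφ1)
      (integrable_mul_of_le_one hi₂ hφm hφ0 hφ1)]
    congr 1
    funext ω
    ring
  have hY₁ : ∫ ω, Y₁ ω * φ ω ∂μ
      = (∫ ω, Y₁ ω * φ₁ ω ∂μ) + ∫ ω, Y₁ ω * (φ ω - φ₁ ω) ∂μ := by
    rw [← integral_add (integrable_mul_of_le_one hi₁ hφ₁m hφ₁0 hφ₁1)
      (integrable_mul_of_le_one hi₁ hψ₁m hψ₁0 hψ₁1)]
    congr 1
    funext ω
    ring
  have hY₂ : ∫ ω, Y₂ ω * φ ω ∂μ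
      = (∫ ω, Y₂ ω * φ₂ ω ∂μ) + ∫ ω, Y₂ ω * (φ ω - φ₂ ω) ∂μ := by
    rw [← integral_add (integrable_mul_of_le_one hi₂ hφ₂m hφ₂0 hφ₂1)
      (integrable_mul_of_le_one hi₂ hψ₂m hψ₂0 hψ₂1)]
    congr 1
    funext ω
    ring
  have hup₁ : ∫ ω, Y₁ ω * (φ ω - φ₁ ω) ∂μ ≤ ∫ u in Set.Ioo (1-s+α₁) 1, leftQuantile μ Y₁ u := by
    have := HL_upper hm₁ hi₁ hψ₁m hψ₁0 hψ₁1 hα₂ hEψ₁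
    have heq : 1 - α₂ = 1 - s + α₁ := by linarith
    rwa [heq] at this
  have hup₂ : ∫ ω, Y₂ ω * (φ ω - φ₂ ω) ∂μ ≤ ∫ u in Set.Ioo (1-s+α₂) 1, leftQuantile μ Y₂ u := by
    have := HL_upper hm₂ hi₂ hψ₂m hψ₂0 hψ₂1 hα₁ hEψ₂
    have heq : 1 - α₁ = 1 - s + α₂ := by linarith
    rwa [heq] at this
  rw [hXφ₁] at hY₁
  rw [hXφ₂] at hY₂
  linarith [hlow, hsplitS, hY₁, hY₂, hup₁, hup₂]

end Core

lemma union_integral_eq {Ω : Type*} [MeasurableSpace Ω] {μ : Measure Ω} [IsProbabilityMeasure μ]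
    {Y : Ω → ℝ} (hm : Measurable Y) (hi : Integrable Y μ) {αi s : ℝ}
    (hαi : αi ∈ Set.Ioo (0:ℝ) 1) (hs1 : s ≤ 1) (hαis : αi ≤ s) :
    ∫ u in (Set.Icc 0 αi ∪ Set.Icc (1-s+αi) 1), leftQuantile μ Y u
      = (∫ u in Set.Ioo (0:ℝ) αi, leftQuantile μ Y u)
        + ∫ u in Set.Ioo (1-s+αi) 1, leftQuantile μ Y u := by
  have h0 : 0 < 1 - s + αi := by linarith [hαi.1]
  have hdisj : MeasureTheory.AEDisjoint volume (Set.Icc (0:ℝ) αi) (Set.Icc (1 - s + αi) 1) := by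
    refine measure_mono_null (fun x hx => (⟨hx.2.1, hx.1.2⟩ : x ∈ Set.Icc (1-s+αi) αi))
      (?_ : volume (Set.Icc (1-s+αi) αi) = 0)
    rw [Real.volume_Icc]
    exact ENNReal.ofReal_eq_zero.mpr (by linarith)
  have h1 : IntegrableOn (leftQuantile μ Y) (Set.Icc (0:ℝ) αi) volume := by
    have := integrableOn_leftQuantile hm hi (Set.Ioo_subset_Ioo le_rfl hαi.2.le)
    rwa [IntegrableOn, Measure.restrict_congr_set Ioo_ae_eq_Icc] at this
  have h2 : IntegrableOn (leftQuantile μ Y) (Set.Icc (1-s+αi) 1) volume := by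
    have := integrableOn_leftQuantile hm hi (Set.Ioo_subset_Ioo h0.le le_rfl)
    rwa [IntegrableOn, Measure.restrict_congr_set Ioo_ae_eq_Icc] at this
  rw [integral_union_ae hdisj measurableSet_Icc.nullMeasurableSet h1 h2,
    setIntegral_congr_set (Ioo_ae_eq_Icc (a := (0:ℝ)) (b := αi)).symm,
    setIntegral_congr_set (Ioo_ae_eq_Icc (a := 1-s+αi) (b := (1:ℝ))).symm]

theorem stmt6 {Ω : Type*} [MeasurableSpace Ω] (μ : Measure Ω) [IsProbabilityMeasure μ]
    (X₁ X₂ : Ω → ℝ) (hX₁ : Integrable X₁ μ) (hX₂ : Integrable X₂ μ)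
    (s α₁ α₂ : ℝ) (hs : 0 < s) (hs1 : s ≤ 1)
    (hα₁ : α₁ ∈ Set.Ioo (0 : ℝ) 1) (hα₂ : α₂ ∈ Set.Ioo (0 : ℝ) 1)
    (hsum : α₁ + α₂ = s) :
    avgQuantile μ (fun ω => X₁ ω + X₂ ω) (Set.Icc 0 s)
      ≤ avgQuantile μ X₁ (Set.Icc 0 α₁ ∪ Set.Icc (1 - s + α₁) 1)
        + avgQuantile μ X₂ (Set.Icc 0 α₂ ∪ Set.Icc (1 - s + α₂) 1) := by
  -- measurable representatives
  set Y₁ := hX₁.1.mk X₁ with hY₁def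
  set Y₂ := hX₂.1.mk X₂ with hY₂def
  have hae₁ : X₁ =ᵐ[μ] Y₁ := hX₁.1.ae_eq_mk
  have hae₂ : X₂ =ᵐ[μ] Y₂ := hX₂.1.ae_eq_mk
  have hm₁ : Measurable Y₁ := hX₁.1.stronglyMeasurable_mk.measurable
  have hm₂ : Measurable Y₂ := hX₂.1.stronglyMeasurable_mk.measurable
  have hi₁ : Integrable Y₁ μ := hX₁.congr hae₁
  have hi₂ : Integrable Y₂ μ := hX₂.congr hae₂
  have hq₁ : leftQuantile μ X₁ = leftQuantile μ Y₁ := leftQuantile_congr hae₁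
  have hq₂ : leftQuantile μ X₂ = leftQuantile μ Y₂ := leftQuantile_congr hae₂
  have hqS : leftQuantile μ (fun ω => X₁ ω + X₂ ω) = leftQuantile μ (fun ω => Y₁ ω + Y₂ ω) := by
    refine leftQuantile_congr ?_
    filter_upwards [hae₁, hae₂] with ω h1 h2
    simp [h1, h2]
  -- volume computations
  have hα₂s : α₂ = s - α₁ := by linarith
  have hvol : ∀ αi : ℝ, αi ∈ Set.Ioo (0:ℝ) 1 → αi ≤ s →
      volume (Set.Icc (0:ℝ) αi ∪ Set.Icc (1 - s + αi) 1) = ENNReal.ofReal s := by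
    intro αi hαi hαis
    have hdisj : AEDisjoint volume (Set.Icc (0:ℝ) αi) (Set.Icc (1 - s + αi) 1) := by
      refine measure_mono_null (fun x hx => ?_) (?_ : volume (Set.Icc (1-s+αi) αi) = 0)
      · exact ⟨hx.2.1, hx.1.2⟩
      · rw [Real.volume_Icc]
        exact ENNReal.ofReal_eq_zero.mpr (by linarith)
    rw [measure_union₀ measurableSet_Icc.nullMeasurableSet hdisj, Real.volume_Icc,
      Real.volume_Icc, ← ENNReal.ofReal_add (by linarith [hαi.1]) (by linarith)]
    congr 1
    ring
  have key := core_ineq (μ := μ) hm₁ hm₂ hi₁ hi₂ hs hs1 hα₁ hα₂ hsum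
  simp only [avgQuantile]
  rw [hqS, hq₁, hq₂]
  rw [Real.volume_Icc, hvol α₁ hα₁ (by linarith [hα₂.1]), hvol α₂ hα₂ (by linarith [hα₁.1])]
  rw [integral_Icc_eq_integral_Ioo]
  rw [union_integral_eq hm₁ hi₁ hα₁ hs1 (by linarith [hα₂.1]),
    union_integral_eq hm₂ hi₂ hα₂ hs1 (by linarith [hα₁.1])]
  rw [show s - 0 = s by ring, ENNReal.toReal_ofReal hs.le]
  have hsi : (0:ℝ) ≤ s⁻¹ := inv_nonneg.mpr hs.le
  calc s⁻¹ * ∫ u in Set.Ioo (0:ℝ) s, leftQuantile μ (fun ω => Y₁ ω + Y₂ ω) u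
      ≤ s⁻¹ * (((∫ u in Set.Ioo (0:ℝ) α₁, leftQuantile μ Y₁ u)
          + ∫ u in Set.Ioo (1-s+α₁) 1, leftQuantile μ Y₁ u)
        + ((∫ u in Set.Ioo (0:ℝ) α₂, leftQuantile μ Y₂ u)
          + ∫ u in Set.Ioo (1-s+α₂) 1, leftQuantile μ Y₂ u)) :=
        mul_le_mul_of_nonneg_left key hsi
    _ = _ := by ring
end

section
/- Let X be an integrable random variable bounded from above, β₁, ..., βₙ ∈ (0,1) with β = Σᵢ βᵢ ∈ (0,1), t ≥ max(ess-sup X, 0), A an event with A = {U_X ≤ β} for a uniform transform U_X of X, and (A₁, ..., Aₙ) a measurable partition of A with P(Aᵢ) = βᵢ. Define Xᵢ = (X - t)·1_{Aᵢ} + (X/n)·1_{Aᶜ} + (t/(n-1))·1_{A \ Aᵢ}. Then Σᵢ Xᵢ = X and Σᵢ R_{[0,βᵢ] ∪ [1-β+βᵢ,1]}(Xᵢ) = R_{[0,β]}(X), so this allocation attains the inf-convolution. -/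
open MeasureTheory Set Filter
open scoped ENNReal

section Helpers

open scoped ENNReal

variable {Ω : Type*} [MeasurableSpace Ω] {μ : Measure Ω} [IsProbabilityMeasure μ] {Y : Ω → ℝ}

private lemma prob_eq_one_of_ae {P : Ω → Prop} (h : ∀ᵐ ω ∂μ, P ω) :
    μ {ω | P ω} = 1 := by
  refine le_antisymm prob_le_one ?_
  have h0 : μ {ω | P ω}ᶜ = 0 := by
    rw [Set.compl_setOf]
    exact ae_iff.mp h
  calc (1 : ℝ≥0∞) = μ univ := measure_univ.symm
    _ ≤ μ {ω | P ω} + μ {ω | P ω}ᶜ := by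
        conv_lhs => rw [← Set.union_compl_self {ω | P ω}]
        exact measure_union_le _ _
    _ = μ {ω | P ω} := by rw [h0, add_zero]

private lemma measF_mono {x y : ℝ} (h : x ≤ y) :
    (μ {ω | Y ω ≤ x}).toReal ≤ (μ {ω | Y ω ≤ y}).toReal :=
  ENNReal.toReal_mono (measure_ne_top _ _)
    (measure_mono fun ω hω => le_trans hω h)

private lemma lq_nonempty (hY : AEMeasurable Y μ) {u : ℝ} (hu : u < 1) :
    {x : ℝ | u ≤ (μ {ω | Y ω ≤ x}).toReal}.Nonempty := by
  rcases le_or_gt u 0 with hu0 | hu0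
  · exact ⟨0, le_trans hu0 ENNReal.toReal_nonneg⟩
  have hmono : Monotone fun k : ℕ => {ω | Y ω ≤ (k : ℝ)} := by
    intro a b hab ω hω
    simp only [mem_setOf_eq] at hω ⊢
    exact le_trans hω (by exact_mod_cast hab)
  have hU : (⋃ k : ℕ, {ω | Y ω ≤ (k : ℝ)}) = univ := by
    ext ω
    simp only [mem_iUnion, mem_setOf_eq, mem_univ, iff_true]
    exact exists_nat_ge (Y ω)
  have hsup := hmono.measure_iUnion (μ := μ)
  rw [hU, measure_univ] at hsup
  have hlt : ENNReal.ofReal u < 1 := by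
    rw [← ENNReal.ofReal_one]
    exact (ENNReal.ofReal_lt_ofReal_iff_of_nonneg hu0.le).mpr hu
  rw [hsup] at hlt
  obtain ⟨k, hk⟩ := lt_iSup_iff.mp hlt
  refine ⟨(k : ℝ), ?_⟩
  calc u = (ENNReal.ofReal u).toReal := (ENNReal.toReal_ofReal hu0.le).symm
    _ ≤ (μ {ω | Y ω ≤ (k : ℝ)}).toReal :=
        ENNReal.toReal_mono (measure_ne_top _ _) hk.le

private lemma lq_bddBelow (hY : AEMeasurable Y μ) {u : ℝ} (hu : 0 < u) :
    BddBelow {x : ℝ | u ≤ (μ {ω | Y ω ≤ x}).toReal} := by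
  have hanti : Antitone fun k : ℕ => {ω | Y ω ≤ -(k : ℝ)} := by
    intro a b hab ω hω
    simp only [mem_setOf_eq] at hω ⊢
    refine le_trans hω ?_
    simp only [neg_le_neg_iff]
    exact_mod_cast hab
  have hns : ∀ k : ℕ, NullMeasurableSet {ω | Y ω ≤ -(k : ℝ)} μ :=
    fun _ => nullMeasurableSet_le hY aemeasurable_const
  have hI : (⋂ k : ℕ, {ω | Y ω ≤ -(k : ℝ)}) = (∅ : Set Ω) := by
    ext ω
    simp only [mem_iInter, mem_setOf_eq, mem_empty_iff_false, iff_false, not_forall, not_le]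
    obtain ⟨k, hk⟩ := exists_nat_gt (-(Y ω))
    exact ⟨k, by linarith⟩
  have hinf := hanti.measure_iInter hns ⟨0, measure_ne_top _ _⟩
  rw [hI, measure_empty] at hinf
  have hex : ∃ k : ℕ, μ {ω | Y ω ≤ -(k : ℝ)} < ENNReal.ofReal u := by
    refine iInf_lt_iff.mp ?_
    rw [← hinf]
    exact ENNReal.ofReal_pos.mpr hu
  obtain ⟨k, hk⟩ := hex
  refine ⟨-(k : ℝ), fun x hx => ?_⟩
  by_contra hxk
  push_neg at hxk
  have h1 : u ≤ (μ {ω | Y ω ≤ -(k : ℝ)}).toReal := le_trans hx (measF_mono hxk.le)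
  have h2 : (μ {ω | Y ω ≤ -(k : ℝ)}).toReal < u := by
    have := ENNReal.toReal_strict_mono ENNReal.ofReal_ne_top hk
    rwa [ENNReal.toReal_ofReal hu.le] at this
  linarith

private lemma lq_le_of_le (hY : AEMeasurable Y μ) {u x : ℝ} (hu : 0 < u)
    (h : u ≤ (μ {ω | Y ω ≤ x}).toReal) : leftQuantile μ Y u ≤ x :=
  csInf_le (lq_bddBelow hY hu) h

private lemma le_F_lq (hY : AEMeasurable Y μ) {u : ℝ} (hu : 0 < u) (hu1 : u < 1) :
    u ≤ (μ {ω | Y ω ≤ leftQuantile μ Y u}).toReal := by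
  set q := leftQuantile μ Y u with hq
  have hne := lq_nonempty hY hu1
  have hbd := lq_bddBelow hY hu
  have hstep : ∀ k : ℕ, ENNReal.ofReal u ≤ μ {ω | Y ω ≤ q + 1/(k+1)} := by
    intro k
    have hlt : q < q + 1/(k+1) := lt_add_of_pos_right _ (by positivity)
    obtain ⟨x, hxS, hxlt⟩ := (csInf_lt_iff hbd hne).mp hlt
    have hle : u ≤ (μ {ω | Y ω ≤ q + 1/(k+1)}).toReal := le_trans hxS (measF_mono hxlt.le)
    exact ENNReal.ofReal_le_of_le_toReal hle
  have hanti : Antitone fun k : ℕ => {ω | Y ω ≤ q + 1/(k+1)} := by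
    intro a b hab ω hω
    simp only [mem_setOf_eq] at hω ⊢
    refine le_trans hω ?_
    have h1 : (a : ℝ) + 1 ≤ (b : ℝ) + 1 := by exact_mod_cast Nat.add_le_add_right hab 1
    have h2 : (1:ℝ)/((b:ℝ)+1) ≤ 1/((a:ℝ)+1) := by
      apply one_div_le_one_div_of_le (by positivity) h1
    linarith
  have hns : ∀ k : ℕ, NullMeasurableSet {ω | Y ω ≤ q + 1/(k+1)} μ :=
    fun _ => nullMeasurableSet_le hY aemeasurable_const
  have hIeq : (⋂ k : ℕ, {ω | Y ω ≤ q + 1/(k+1)}) = {ω | Y ω ≤ q} := by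
    ext ω
    simp only [mem_iInter, mem_setOf_eq]
    constructor
    · intro h
      by_contra hc
      push_neg at hc
      obtain ⟨k, hk⟩ := exists_nat_one_div_lt (show (0:ℝ) < Y ω - q by linarith)
      have := h k
      have hcast : (1:ℝ)/((k:ℝ)+1) < Y ω - q := by exact_mod_cast hk
      linarith
    · intro h k
      have : (0:ℝ) < 1/((k:ℝ)+1) := by positivity
      linarith
  have hinf := hanti.measure_iInter hns ⟨0, measure_ne_top _ _⟩
  rw [hIeq] at hinf
  have hfin : ENNReal.ofReal u ≤ μ {ω | Y ω ≤ q} := by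
    rw [hinf]
    exact le_iInf hstep
  calc u = (ENNReal.ofReal u).toReal := (ENNReal.toReal_ofReal hu.le).symm
    _ ≤ (μ {ω | Y ω ≤ q}).toReal := ENNReal.toReal_mono (measure_ne_top _ _) hfin

private lemma lq_le_iff (hY : AEMeasurable Y μ) {u x : ℝ} (hu : 0 < u) (hu1 : u < 1) :
    leftQuantile μ Y u ≤ x ↔ u ≤ (μ {ω | Y ω ≤ x}).toReal :=
  ⟨fun h => le_trans (le_F_lq hY hu hu1) (measF_mono h), fun h => lq_le_of_le hY hu h⟩

private lemma lq_mono (hY : AEMeasurable Y μ) {u v : ℝ} (hu : 0 < u) (huv : u ≤ v) (hv : v < 1) :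
    leftQuantile μ Y u ≤ leftQuantile μ Y v :=
  csInf_le_csInf (lq_bddBelow hY hu) (lq_nonempty hY hv) (fun _ hx => le_trans huv hx)

private lemma lq_aesm (hY : AEMeasurable Y μ) :
    AEStronglyMeasurable (leftQuantile μ Y) (volume.restrict (Ioo (0:ℝ) 1)) := by
  classical
  set c : ℝ := leftQuantile μ Y (1/2) with hc
  set g : ℝ → ℝ := (Ioo (0:ℝ) 1).piecewise (leftQuantile μ Y) (fun _ => c) with hg
  have hgm : Measurable g := by
    apply measurable_of_Iic
    intro x
    have hset : g ⁻¹' Iic x =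
        (Ioo (0:ℝ) 1 ∩ Iic ((μ {ω | Y ω ≤ x}).toReal)) ∪ ((Ioo (0:ℝ) 1)ᶜ ∩ {u : ℝ | c ≤ x}) := by
      ext u
      by_cases hu : u ∈ Ioo (0:ℝ) 1
      · simp only [mem_preimage, mem_Iic, hg, Set.piecewise_eq_of_mem _ _ _ hu, mem_union,
          mem_inter_iff, hu, mem_compl_iff, not_true_eq_false, false_and, or_false, true_and,
          mem_setOf_eq]
        exact lq_le_iff hY hu.1 hu.2
      · simp only [mem_preimage, mem_Iic, hg, Set.piecewise_eq_of_notMem _ _ _ hu, mem_union,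
          mem_inter_iff, hu, mem_compl_iff, not_false_eq_true, false_and, true_and, false_or,
          mem_setOf_eq]
    rw [hset]
    refine MeasurableSet.union (measurableSet_Ioo.inter measurableSet_Iic)
      (measurableSet_Ioo.compl.inter ?_)
    by_cases hcx : c ≤ x
    · simp only [hcx, setOf_true]
      exact MeasurableSet.univ
    · simp only [hcx, setOf_false]
      exact MeasurableSet.empty
  refine hgm.aestronglyMeasurable.congr ?_
  rw [Filter.EventuallyEq, ae_restrict_iff' measurableSet_Ioo]
  exact ae_of_all _ fun u hu => Set.piecewise_eq_of_mem _ _ _ hu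

private lemma meas_match_pos (hY : AEMeasurable Y μ) {s : ℝ} :
    volume.restrict (Ioo (0:ℝ) 1) {u | s < leftQuantile μ Y u} = μ {ω | s < Y ω} := by
  rw [Measure.restrict_apply' measurableSet_Ioo]
  have h1 : {u | s < leftQuantile μ Y u} ∩ Ioo (0:ℝ) 1
      = Ioo ((μ {ω | Y ω ≤ s}).toReal) 1 := by
    ext u
    simp only [mem_inter_iff, mem_setOf_eq, mem_Ioo]
    constructor
    · rintro ⟨hu1, hu2⟩
      have hnle : ¬ u ≤ (μ {ω | Y ω ≤ s}).toReal := by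
        intro h
        exact absurd (lq_le_of_le hY hu2.1 h) (not_le.2 hu1)
      exact ⟨not_le.mp hnle, hu2.2⟩
    · rintro ⟨hFu, hu1⟩
      have hu0 : 0 < u := lt_of_le_of_lt ENNReal.toReal_nonneg hFu
      refine ⟨?_, hu0, hu1⟩
      by_contra hle
      push_neg at hle
      exact absurd ((lq_le_iff hY hu0 hu1).mp hle) (not_le.2 hFu)
  rw [h1, Real.volume_Ioo]
  have hcompl : {ω | s < Y ω} = {ω | Y ω ≤ s}ᶜ := by
    ext ω
    simp only [mem_setOf_eq, mem_compl_iff, not_le]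
  rw [hcompl, measure_compl₀ (nullMeasurableSet_le hY aemeasurable_const) (measure_ne_top _ _),
    measure_univ, ENNReal.ofReal_sub _ ENNReal.toReal_nonneg, ENNReal.ofReal_one,
    ENNReal.ofReal_toReal (measure_ne_top _ _)]

private lemma meas_match_neg (hY : AEMeasurable Y μ) {s : ℝ} :
    volume.restrict (Ioo (0:ℝ) 1) {u | leftQuantile μ Y u < -s} = μ {ω | Y ω < -s} := by
  rw [Measure.restrict_apply' measurableSet_Ioo]
  set r : ℝ≥0∞ := μ {ω | Y ω < -s} with hr
  have hrt : r ≠ ⊤ := measure_ne_top _ _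
  have hr1 : r ≤ 1 := prob_le_one
  have hsub1 : {u | leftQuantile μ Y u < -s} ∩ Ioo (0:ℝ) 1 ⊆ Ioc 0 r.toReal := by
    rintro u ⟨hu1, hu2⟩
    simp only [mem_setOf_eq] at hu1
    refine ⟨hu2.1, ?_⟩
    calc u ≤ (μ {ω | Y ω ≤ leftQuantile μ Y u}).toReal := le_F_lq hY hu2.1 hu2.2
      _ ≤ r.toReal := ENNReal.toReal_mono hrt
          (measure_mono fun ω hω => lt_of_le_of_lt hω hu1)
  have hsub2 : Ioo (0:ℝ) r.toReal ⊆ {u | leftQuantile μ Y u < -s} ∩ Ioo (0:ℝ) 1 := by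
    rintro u ⟨hu0, hur⟩
    have hrle : r.toReal ≤ 1 := by
      have := ENNReal.toReal_mono ENNReal.one_ne_top hr1
      simpa using this
    have hu1 : u < 1 := lt_of_lt_of_le hur hrle
    have hmono : Monotone fun k : ℕ => {ω | Y ω ≤ -s - 1/((k:ℝ)+1)} := by
      intro a b hab ω hω
      simp only [mem_setOf_eq] at hω ⊢
      refine le_trans hω ?_
      have h1 : (a : ℝ) + 1 ≤ (b : ℝ) + 1 := by exact_mod_cast Nat.add_le_add_right hab 1
      have h2 : (1:ℝ)/((b:ℝ)+1) ≤ 1/((a:ℝ)+1) := one_div_le_one_div_of_le (by positivity) h1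
      linarith
    have hU : (⋃ k : ℕ, {ω | Y ω ≤ -s - 1/((k:ℝ)+1)}) = {ω | Y ω < -s} := by
      ext ω
      simp only [mem_iUnion, mem_setOf_eq]
      constructor
      · rintro ⟨k, hk⟩
        have : (0:ℝ) < 1/((k:ℝ)+1) := by positivity
        linarith
      · intro h
        obtain ⟨k, hk⟩ := exists_nat_one_div_lt (show (0:ℝ) < -s - Y ω by linarith)
        have hcast : (1:ℝ)/((k:ℝ)+1) < -s - Y ω := by exact_mod_cast hk
        exact ⟨k, by linarith⟩
    have hsup := hmono.measure_iUnion (μ := μ)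
    rw [hU, ← hr] at hsup
    have hlt : ENNReal.ofReal u < r := by
      rw [← ENNReal.ofReal_toReal hrt]
      exact (ENNReal.ofReal_lt_ofReal_iff_of_nonneg hu0.le).mpr hur
    rw [hsup] at hlt
    obtain ⟨k, hk⟩ := lt_iSup_iff.mp hlt
    have huk : u ≤ (μ {ω | Y ω ≤ -s - 1/((k:ℝ)+1)}).toReal := by
      calc u = (ENNReal.ofReal u).toReal := (ENNReal.toReal_ofReal hu0.le).symm
        _ ≤ _ := ENNReal.toReal_mono (measure_ne_top _ _) hk.le
    have hq : leftQuantile μ Y u ≤ -s - 1/((k:ℝ)+1) := lq_le_of_le hY hu0 huk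
    have hpos : (0:ℝ) < 1/((k:ℝ)+1) := by positivity
    exact ⟨show leftQuantile μ Y u < -s from lt_of_le_of_lt hq (by linarith), hu0, hu1⟩
  refine le_antisymm ?_ ?_
  · calc volume ({u | leftQuantile μ Y u < -s} ∩ Ioo (0:ℝ) 1)
        ≤ volume (Ioc (0:ℝ) r.toReal) := measure_mono hsub1
      _ = ENNReal.ofReal (r.toReal - 0) := Real.volume_Ioc
      _ = r := by rw [sub_zero, ENNReal.ofReal_toReal hrt]
  · calc r = ENNReal.ofReal (r.toReal - 0) := by rw [sub_zero, ENNReal.ofReal_toReal hrt]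
      _ = volume (Ioo (0:ℝ) r.toReal) := Real.volume_Ioo.symm
      _ ≤ volume ({u | leftQuantile μ Y u < -s} ∩ Ioo (0:ℝ) 1) := measure_mono hsub2

private lemma ofReal_max_zero (a : ℝ) : ENNReal.ofReal (max a 0) = ENNReal.ofReal a := by
  rcases le_total a 0 with h | h
  · rw [max_eq_right h, ENNReal.ofReal_zero, eq_comm, ENNReal.ofReal_eq_zero]
    exact h
  · rw [max_eq_left h]

private lemma lq_lintegral_pos (hY : Integrable Y μ) :
    ∫⁻ u in Ioo (0:ℝ) 1, ENNReal.ofReal (leftQuantile μ Y u)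
      = ∫⁻ ω, ENNReal.ofReal (Y ω) ∂μ := by
  have hYm := hY.aemeasurable
  have hql : ∫⁻ u in Ioo (0:ℝ) 1, ENNReal.ofReal (leftQuantile μ Y u)
      = ∫⁻ u in Ioo (0:ℝ) 1, ENNReal.ofReal (max (leftQuantile μ Y u) 0) :=
    lintegral_congr fun u => (ofReal_max_zero _).symm
  have hyl : ∫⁻ ω, ENNReal.ofReal (Y ω) ∂μ = ∫⁻ ω, ENNReal.ofReal (max (Y ω) 0) ∂μ :=
    lintegral_congr fun ω => (ofReal_max_zero _).symm
  rw [hql, hyl,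
    lintegral_eq_lintegral_meas_lt (f := fun u => max (leftQuantile μ Y u) 0) _
      (ae_of_all _ fun u => le_max_right _ _)
      ((lq_aesm hYm).aemeasurable.max aemeasurable_const),
    lintegral_eq_lintegral_meas_lt (f := fun ω => max (Y ω) 0) μ
      (ae_of_all _ fun ω => le_max_right _ _)
      (hYm.max aemeasurable_const)]
  refine setLIntegral_congr_fun_ae measurableSet_Ioi (ae_of_all _ fun s hs => ?_)
  have hs0 : (0:ℝ) < s := hs
  have h1 : {u : ℝ | s < max (leftQuantile μ Y u) 0} = {u | s < leftQuantile μ Y u} := by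
    ext u
    simp only [mem_setOf_eq, lt_max_iff]
    constructor
    · rintro (h | h)
      · exact h
      · linarith
    · exact Or.inl
  have h2 : {ω | s < max (Y ω) 0} = {ω | s < Y ω} := by
    ext ω
    simp only [mem_setOf_eq, lt_max_iff]
    constructor
    · rintro (h | h)
      · exact h
      · linarith
    · exact Or.inl
  rw [h1, h2, meas_match_pos hYm]

private lemma lq_lintegral_neg (hY : Integrable Y μ) :
    ∫⁻ u in Ioo (0:ℝ) 1, ENNReal.ofReal (-(leftQuantile μ Y u))
      = ∫⁻ ω, ENNReal.ofReal (-(Y ω)) ∂μ := by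
  have hYm := hY.aemeasurable
  have hql : ∫⁻ u in Ioo (0:ℝ) 1, ENNReal.ofReal (-(leftQuantile μ Y u))
      = ∫⁻ u in Ioo (0:ℝ) 1, ENNReal.ofReal (max (-(leftQuantile μ Y u)) 0) :=
    lintegral_congr fun u => (ofReal_max_zero _).symm
  have hyl : ∫⁻ ω, ENNReal.ofReal (-(Y ω)) ∂μ
      = ∫⁻ ω, ENNReal.ofReal (max (-(Y ω)) 0) ∂μ :=
    lintegral_congr fun ω => (ofReal_max_zero _).symm
  rw [hql, hyl,
    lintegral_eq_lintegral_meas_lt (f := fun u => max (-(leftQuantile μ Y u)) 0) _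
      (ae_of_all _ fun u => le_max_right _ _)
      ((lq_aesm hYm).aemeasurable.neg.max aemeasurable_const),
    lintegral_eq_lintegral_meas_lt (f := fun ω => max (-(Y ω)) 0) μ
      (ae_of_all _ fun ω => le_max_right _ _)
      (hYm.neg.max aemeasurable_const)]
  refine setLIntegral_congr_fun_ae measurableSet_Ioi (ae_of_all _ fun s hs => ?_)
  have hs0 : (0:ℝ) < s := hs
  have h1 : {u : ℝ | s < max (-(leftQuantile μ Y u)) 0} = {u | leftQuantile μ Y u < -s} := by
    ext u
    simp only [mem_setOf_eq, lt_max_iff]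
    constructor
    · rintro (h | h)
      · linarith
      · linarith
    · intro h
      left
      linarith
  have h2 : {ω | s < max (-(Y ω)) 0} = {ω | Y ω < -s} := by
    ext ω
    simp only [mem_setOf_eq, lt_max_iff]
    constructor
    · rintro (h | h)
      · linarith
      · linarith
    · intro h
      left
      linarith
  rw [h1, h2, meas_match_neg hYm]

private lemma lq_integrableOn (hY : Integrable Y μ) :
    IntegrableOn (leftQuantile μ Y) (Ioo (0:ℝ) 1) volume := by
  refine ⟨lq_aesm hY.aemeasurable, ?_⟩
  rw [hasFiniteIntegral_iff_norm]
  have hpt : ∀ a : ℝ, ENNReal.ofReal ‖a‖ = ENNReal.ofReal a + ENNReal.ofReal (-a) := by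
    intro a
    rcases le_total a 0 with h | h
    · rw [Real.norm_eq_abs, abs_of_nonpos h]
      rw [show ENNReal.ofReal a = 0 from ENNReal.ofReal_eq_zero.mpr h, zero_add]
    · rw [Real.norm_eq_abs, abs_of_nonneg h,
        show ENNReal.ofReal (-a) = 0 from ENNReal.ofReal_eq_zero.mpr (by linarith), add_zero]
  have hmq : AEMeasurable (fun u => ENNReal.ofReal (leftQuantile μ Y u))
      (volume.restrict (Ioo (0:ℝ) 1)) :=
    ENNReal.measurable_ofReal.comp_aemeasurable (lq_aesm hY.aemeasurable).aemeasurable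
  calc ∫⁻ u in Ioo (0:ℝ) 1, ENNReal.ofReal ‖leftQuantile μ Y u‖
      = ∫⁻ u in Ioo (0:ℝ) 1,
          (ENNReal.ofReal (leftQuantile μ Y u) + ENNReal.ofReal (-(leftQuantile μ Y u))) :=
        lintegral_congr fun u => hpt _
    _ = (∫⁻ u in Ioo (0:ℝ) 1, ENNReal.ofReal (leftQuantile μ Y u))
          + ∫⁻ u in Ioo (0:ℝ) 1, ENNReal.ofReal (-(leftQuantile μ Y u)) :=
        lintegral_add_left' hmq _
    _ = (∫⁻ ω, ENNReal.ofReal (Y ω) ∂μ) + ∫⁻ ω, ENNReal.ofReal (-(Y ω)) ∂μ := by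
        rw [lq_lintegral_pos hY, lq_lintegral_neg hY]
    _ < ⊤ := by
        have hnorm : ∫⁻ ω, ENNReal.ofReal ‖Y ω‖ ∂μ < ⊤ :=
          (hasFiniteIntegral_iff_norm Y).mp hY.hasFiniteIntegral
        have hb1 : ∫⁻ ω, ENNReal.ofReal (Y ω) ∂μ < ⊤ :=
          lt_of_le_of_lt (lintegral_mono fun ω =>
            ENNReal.ofReal_le_ofReal (by rw [Real.norm_eq_abs]; exact le_abs_self _)) hnorm
        have hb2 : ∫⁻ ω, ENNReal.ofReal (-(Y ω)) ∂μ < ⊤ :=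
          lt_of_le_of_lt (lintegral_mono fun ω =>
            ENNReal.ofReal_le_ofReal (by rw [Real.norm_eq_abs]; exact neg_le_abs _)) hnorm
        exact ENNReal.add_lt_top.mpr ⟨hb1, hb2⟩

private lemma lq_integral (hY : Integrable Y μ) :
    ∫ u in Ioo (0:ℝ) 1, leftQuantile μ Y u = ∫ ω, Y ω ∂μ := by
  rw [integral_eq_lintegral_pos_part_sub_lintegral_neg_part (lq_integrableOn hY),
    integral_eq_lintegral_pos_part_sub_lintegral_neg_part hY,
    lq_lintegral_pos hY, lq_lintegral_neg hY]

private lemma lq_integrableOn_Icc (hY : Integrable Y μ) :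
    IntegrableOn (leftQuantile μ Y) (Icc (0:ℝ) 1) volume := by
  have h := lq_integrableOn hY
  unfold IntegrableOn at h ⊢
  rwa [show volume.restrict (Icc (0:ℝ) 1) = volume.restrict (Ioo (0:ℝ) 1) from
    (Measure.restrict_congr_set Ioo_ae_eq_Icc).symm]

private lemma lq_setIntegral_lower (hY : Integrable Y μ) {D : Set Ω} (hD : MeasurableSet D)
    {p c : ℝ} (hp : (μ D).toReal = p) (hp0 : 0 < p) (hp1 : p < 1)
    (hc1 : ∀ᵐ ω ∂μ, ω ∈ D → Y ω ≤ c) (hc2 : ∀ᵐ ω ∂μ, ω ∉ D → c ≤ Y ω) :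
    ∫ u in Icc (0:ℝ) p, leftQuantile μ Y u = ∫ ω in D, Y ω ∂μ := by
  classical
  set Z : Ω → ℝ := D.piecewise Y (fun _ => c) with hZdef
  have hZeq : Z = D.indicator Y + Dᶜ.indicator (fun _ => c) := by
    funext ω
    by_cases hω : ω ∈ D <;>
      simp [hZdef, Set.piecewise, hω, Set.indicator]
  have hZint : Integrable Z μ := by
    rw [hZeq]
    exact (hY.indicator hD).add ((integrable_const c).indicator hD.compl)
  have hZm : AEMeasurable Z μ := hZint.aemeasurable
  have hmul : ∀ x : ℝ, c ≤ x → μ {ω | Z ω ≤ x} = 1 := by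
    intro x hcx
    apply prob_eq_one_of_ae
    filter_upwards [hc1] with ω h1
    show Z ω ≤ x
    rw [hZdef]
    by_cases hω : ω ∈ D
    · rw [Set.piecewise_eq_of_mem _ _ _ hω]
      exact le_trans (h1 hω) hcx
    · rw [Set.piecewise_eq_of_notMem _ _ _ hω]
      exact hcx
  have hmlt : ∀ x : ℝ, x < c → μ {ω | Z ω ≤ x} = μ {ω | Y ω ≤ x} := by
    intro x hxc
    apply measure_congr
    rw [Filter.eventuallyEq_set]
    filter_upwards [hc2] with ω h2
    show Z ω ≤ x ↔ Y ω ≤ x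
    rw [hZdef]
    by_cases hω : ω ∈ D
    · rw [Set.piecewise_eq_of_mem _ _ _ hω]
    · rw [Set.piecewise_eq_of_notMem _ _ _ hω]
      constructor
      · intro h
        exact absurd h (not_le.2 hxc)
      · intro h
        exact absurd (le_trans (h2 hω) h) (not_le.2 hxc)
  have hmD : ∀ x : ℝ, x < c → μ {ω | Y ω ≤ x} ≤ μ D := by
    intro x hxc
    apply measure_mono_ae
    filter_upwards [hc2] with ω h2 hω
    by_contra hD'
    exact absurd (le_trans (h2 hD') hω) (not_le.2 hxc)
  have hDle : ∀ x : ℝ, c ≤ x → μ D ≤ μ {ω | Y ω ≤ x} := by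
    intro x hcx
    apply measure_mono_ae
    filter_upwards [hc1] with ω h1 hω
    exact le_trans (h1 hω) hcx
  have hqq : ∀ u ∈ Ioc (0:ℝ) p, leftQuantile μ Z u = leftQuantile μ Y u := by
    rintro u ⟨hu0, hup⟩
    unfold leftQuantile
    congr 1
    ext x
    simp only [mem_setOf_eq]
    rcases lt_or_ge x c with hx | hx
    · rw [hmlt x hx]
    · have hZ1 : (μ {ω | Z ω ≤ x}).toReal = 1 := by rw [hmul x hx, ENNReal.toReal_one]
      have hY1 : p ≤ (μ {ω | Y ω ≤ x}).toReal := by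
        rw [← hp]
        exact ENNReal.toReal_mono (measure_ne_top _ _) (hDle x hx)
      constructor <;> intro _
      · exact le_trans hup hY1
      · rw [hZ1]
        linarith
  have hqc : ∀ u ∈ Ioo p 1, leftQuantile μ Z u = c := by
    rintro u ⟨hpu, hu1⟩
    have hu0 : 0 < u := lt_trans hp0 hpu
    have hcmem : u ≤ (μ {ω | Z ω ≤ c}).toReal := by
      rw [hmul c le_rfl, ENNReal.toReal_one]
      exact hu1.le
    refine le_antisymm (lq_le_of_le hZm hu0 hcmem) ?_
    refine le_csInf ⟨c, hcmem⟩ ?_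
    intro x hx
    by_contra hxc
    push_neg at hxc
    have hle : (μ {ω | Z ω ≤ x}).toReal ≤ p := by
      rw [hmlt x hxc, ← hp]
      exact ENNReal.toReal_mono (measure_ne_top _ _) (hmD x hxc)
    simp only [mem_setOf_eq] at hx
    linarith
  have hZq_int := lq_integrableOn hZint
  have h41 : Ioo (0:ℝ) 1 = Ioo 0 p ∪ Ico p 1 := (Ioo_union_Ico_eq_Ioo hp0 hp1.le).symm
  have hdisj2 : Disjoint (Ioo (0:ℝ) p) (Ico p 1) := by
    rw [Set.disjoint_left]
    rintro u ⟨_, hup⟩ ⟨hpu, _⟩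
    exact absurd hpu (not_le.2 hup)
  have hsplit : ∫ u in Ioo (0:ℝ) 1, leftQuantile μ Z u
      = (∫ u in Ioo (0:ℝ) p, leftQuantile μ Z u) + ∫ u in Ico p 1, leftQuantile μ Z u := by
    rw [h41]
    exact setIntegral_union hdisj2 measurableSet_Ico
      (hZq_int.mono_set (Ioo_subset_Ioo le_rfl hp1.le))
      (hZq_int.mono_set (fun u hu => ⟨lt_of_lt_of_le hp0 hu.1, hu.2⟩))
  have htop : ∫ u in Ico p 1, leftQuantile μ Z u = (1 - p) * c := by
    rw [← setIntegral_congr_set Ioo_ae_eq_Ico,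
      setIntegral_congr_fun measurableSet_Ioo (fun u hu => hqc u hu),
      setIntegral_const, measureReal_def, Real.volume_Ioo, ENNReal.toReal_ofReal (by linarith), smul_eq_mul]
  have hZsum : ∫ ω, Z ω ∂μ = (∫ ω in D, Y ω ∂μ) + (1 - p) * c := by
    rw [← integral_add_compl hD hZint]
    congr 1
    · exact setIntegral_congr_fun hD fun ω hω => by
        rw [hZdef]; exact Set.piecewise_eq_of_mem _ _ _ hω
    · rw [setIntegral_congr_fun (f := Z) (g := fun _ => c) hD.compl
        (fun ω (hω : ω ∈ Dᶜ) => by rw [hZdef]; exact Set.piecewise_eq_of_notMem _ _ _ hω),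
        setIntegral_const, smul_eq_mul]
      congr 1
      rw [measureReal_def, measure_compl hD (measure_ne_top _ _), measure_univ,
        ENNReal.toReal_sub_of_le prob_le_one ENNReal.one_ne_top, ENNReal.toReal_one, hp]
  have hZ01 := lq_integral hZint
  have hmain : ∫ u in Ioo (0:ℝ) p, leftQuantile μ Z u = ∫ ω in D, Y ω ∂μ := by
    have h := hsplit
    rw [hZ01, hZsum, htop] at h
    linarith
  calc ∫ u in Icc (0:ℝ) p, leftQuantile μ Y u
      = ∫ u in Ioo (0:ℝ) p, leftQuantile μ Y u := (setIntegral_congr_set Ioo_ae_eq_Icc).symm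
    _ = ∫ u in Ioo (0:ℝ) p, leftQuantile μ Z u :=
        setIntegral_congr_fun measurableSet_Ioo (fun u hu => (hqq u ⟨hu.1, hu.2.le⟩).symm)
    _ = ∫ ω in D, Y ω ∂μ := hmain

private lemma lq_setIntegral_upper (hY : Integrable Y μ) {D : Set Ω} (hD : MeasurableSet D)
    {p c : ℝ} (hp : (μ D).toReal = p) (hp0 : 0 < p) (hp1 : p < 1)
    (hc1 : ∀ᵐ ω ∂μ, ω ∈ D → Y ω ≤ c) (hc2 : ∀ᵐ ω ∂μ, ω ∉ D → c ≤ Y ω) :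
    ∫ u in Icc p 1, leftQuantile μ Y u = ∫ ω in Dᶜ, Y ω ∂μ := by
  have hlow := lq_setIntegral_lower hY hD hp hp0 hp1 hc1 hc2
  have hQint := lq_integrableOn hY
  have h41 : Ioo (0:ℝ) 1 = Ioo 0 p ∪ Ico p 1 := (Ioo_union_Ico_eq_Ioo hp0 hp1.le).symm
  have hdisj2 : Disjoint (Ioo (0:ℝ) p) (Ico p 1) := by
    rw [Set.disjoint_left]
    rintro u ⟨_, hup⟩ ⟨hpu, _⟩
    exact absurd hpu (not_le.2 hup)
  have hsplit : ∫ u in Ioo (0:ℝ) 1, leftQuantile μ Y u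
      = (∫ u in Ioo (0:ℝ) p, leftQuantile μ Y u) + ∫ u in Ico p 1, leftQuantile μ Y u := by
    rw [h41]
    exact setIntegral_union hdisj2 measurableSet_Ico
      (hQint.mono_set (Ioo_subset_Ioo le_rfl hp1.le))
      (hQint.mono_set (fun u hu => ⟨lt_of_lt_of_le hp0 hu.1, hu.2⟩))
  have h1 : ∫ u in Ioo (0:ℝ) p, leftQuantile μ Y u = ∫ ω in D, Y ω ∂μ := by
    rw [← hlow]
    exact setIntegral_congr_set Ioo_ae_eq_Icc
  have h2 : ∫ u in Icc p 1, leftQuantile μ Y u = ∫ u in Ico p 1, leftQuantile μ Y u :=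
    (setIntegral_congr_set Ico_ae_eq_Icc).symm
  have h3 := lq_integral hY
  have h4 : (∫ ω in D, Y ω ∂μ) + (∫ ω in Dᶜ, Y ω ∂μ) = ∫ ω, Y ω ∂μ :=
    integral_add_compl hD hY
  rw [h2]
  linarith

end Helpers

theorem stmt8 {Ω : Type*} [MeasurableSpace Ω] (μ : Measure Ω) [IsProbabilityMeasure μ]
    (n : ℕ) (hn : 2 ≤ n) (X : Ω → ℝ) (hX : Integrable X μ)
    (hbdd : ∃ C : ℝ, ∀ᵐ ω ∂μ, X ω ≤ C)
    (β : Fin n → ℝ) (hβ : ∀ i, β i ∈ Set.Ioo (0 : ℝ) 1)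
    (B : ℝ) (hBdef : B = ∑ i, β i) (hB : B ∈ Set.Ioo (0 : ℝ) 1)
    (t : ℝ) (ht : max (essSup X μ) 0 ≤ t)
    (U : Ω → ℝ) (hUlaw : Measure.map U μ = volume.restrict (Set.Icc (0 : ℝ) 1))
    (hUX : ∀ᵐ ω ∂μ, leftQuantile μ X (U ω) = X ω)
    (A : Fin n → Set Ω) (hAmeas : ∀ i, MeasurableSet (A i))
    (hdisj : Pairwise (Function.onFun Disjoint A))
    (hunion : (⋃ i, A i) = {ω | U ω ≤ B})
    (hAprob : ∀ i, (μ (A i)).toReal = β i) :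
    (∀ ω, (∑ i,
        (Set.indicator (A i) (fun ω' => X ω' - t) ω
          + Set.indicator {ω' | U ω' ≤ B}ᶜ (fun ω' => X ω' / n) ω
          + Set.indicator ({ω' | U ω' ≤ B} \ A i) (fun _ => t / (n - 1)) ω)) = X ω)
    ∧ (∑ i, avgQuantile μ
          (fun ω => Set.indicator (A i) (fun ω' => X ω' - t) ω
            + Set.indicator {ω' | U ω' ≤ B}ᶜ (fun ω' => X ω' / n) ω
            + Set.indicator ({ω' | U ω' ≤ B} \ A i) (fun _ => t / (n - 1)) ω)
          (Set.Icc 0 (β i) ∪ Set.Icc (1 - B + β i) 1))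
        = avgQuantile μ X (Set.Icc 0 B) := by
  classical
  have hnR : (2:ℝ) ≤ (n:ℝ) := by exact_mod_cast hn
  have hn10 : (0:ℝ) < (n:ℝ) - 1 := by linarith
  have hn0 : (0:ℝ) < (n:ℝ) := by linarith
  have hne1 : ((n:ℝ) - 1) ≠ 0 := ne_of_gt hn10
  obtain ⟨hB0, hB1⟩ := hB
  set S : Set Ω := {ω | U ω ≤ B} with hSdef
  have hS : MeasurableSet S := by
    rw [← hunion]
    exact MeasurableSet.iUnion hAmeas
  have hsub : ∀ i, A i ⊆ S := fun i => by
    rw [← hunion]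
    exact subset_iUnion A i
  have hβpos : ∀ i, 0 < β i := fun i => (hβ i).1
  have hβlt : ∀ i, β i < B := by
    intro i
    have hsum : β i + ∑ j ∈ Finset.univ.erase i, β j = ∑ j, β j :=
      Finset.add_sum_erase _ _ (Finset.mem_univ i)
    have hpos : 0 < ∑ j ∈ Finset.univ.erase i, β j := by
      apply Finset.sum_pos (fun j _ => hβpos j)
      have hcard : (Finset.univ.erase i).card = n - 1 := by
        rw [Finset.card_erase_of_mem (Finset.mem_univ i), Finset.card_univ, Fintype.card_fin]
      rw [← Finset.card_pos, hcard]
      omega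
    rw [hBdef]
    linarith
  have hAfin : ∀ i, μ (A i) = ENNReal.ofReal (β i) := fun i => by
    rw [← hAprob i, ENNReal.ofReal_toReal (measure_ne_top _ _)]
  have hSmeasure : μ S = ENNReal.ofReal B := by
    rw [← hunion, measure_iUnion hdisj hAmeas, tsum_fintype, hBdef,
      ENNReal.ofReal_sum_of_nonneg (fun i _ => (hβpos i).le)]
    exact Finset.sum_congr rfl fun i _ => hAfin i
  have hSreal : (μ S).toReal = B := by
    rw [hSmeasure, ENNReal.toReal_ofReal hB0.le]
  have hXbdd : IsBoundedUnder (· ≤ ·) (ae μ) X := by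
    obtain ⟨C, hC⟩ := hbdd
    exact ⟨C, eventually_map.mpr hC⟩
  have E1 : ∀ᵐ ω ∂μ, X ω ≤ t := by
    filter_upwards [ae_le_essSup hXbdd] with ω h
    exact le_trans h (le_trans (le_max_left _ _) ht)
  have ht0 : 0 ≤ t := le_trans (le_max_right _ _) ht
  have hXm : AEMeasurable X μ := hX.aemeasurable
  set c₀ : ℝ := leftQuantile μ X B with hc₀def
  have hXt1 : (μ {ω | X ω ≤ t}).toReal = 1 := by
    rw [prob_eq_one_of_ae E1, ENNReal.toReal_one]
  have hc₀t : c₀ ≤ t := lq_le_of_le hXm hB0 (by rw [hXt1]; exact hB1.le)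
  have hUm : AEMeasurable U μ := by
    by_contra hUm
    have h1 : (0 : ℝ≥0∞) = volume.restrict (Icc (0:ℝ) 1) univ := by
      rw [← hUlaw, Measure.map_of_not_aemeasurable hUm]
      rfl
    rw [Measure.restrict_apply_univ, Real.volume_Icc] at h1
    simp at h1
  have hUae : ∀ᵐ ω ∂μ, U ω ∈ Ioo (0:ℝ) 1 := by
    have hpre : μ (U ⁻¹' (Ioo (0:ℝ) 1)) = 1 := by
      rw [← Measure.map_apply_of_aemeasurable hUm measurableSet_Ioo, hUlaw,
        Measure.restrict_apply measurableSet_Ioo,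
        Set.inter_eq_left.mpr Ioo_subset_Icc_self, Real.volume_Ioo]
      norm_num
    have hcompl : μ (U ⁻¹' (Ioo (0:ℝ) 1))ᶜ = 0 := by
      have hnm : NullMeasurableSet (U ⁻¹' (Ioo (0:ℝ) 1)) μ :=
        hUm.nullMeasurable measurableSet_Ioo
      rw [measure_compl₀ hnm (measure_ne_top _ _), measure_univ, hpre, tsub_self]
    have hset : {ω | ¬ U ω ∈ Ioo (0:ℝ) 1} = (U ⁻¹' (Ioo (0:ℝ) 1))ᶜ := rfl
    rw [ae_iff, hset]
    exact hcompl
  have E2 : ∀ᵐ ω ∂μ, ω ∈ S → X ω ≤ c₀ := by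
    filter_upwards [hUX, hUae] with ω h1 h2 hmem
    have hle : U ω ≤ B := hmem
    rw [← h1]
    exact lq_mono hXm h2.1 hle hB1
  have E3 : ∀ᵐ ω ∂μ, ω ∉ S → c₀ ≤ X ω := by
    filter_upwards [hUX, hUae] with ω h1 h2 hmem
    have hgt : B < U ω := not_le.mp hmem
    rw [← h1]
    exact lq_mono hXm hB0 hgt.le h2.2
  set G : Fin n → Ω → ℝ := fun i ω =>
    Set.indicator (A i) (fun ω' => X ω' - t) ω
      + Set.indicator Sᶜ (fun ω' => X ω' / n) ω
      + Set.indicator (S \ A i) (fun _ => t / (n - 1)) ω with hGdef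
  have hG_onA : ∀ i ω, ω ∈ A i → G i ω = X ω - t := by
    intro i ω hω
    have h1 : ω ∈ S := hsub i hω
    show Set.indicator (A i) (fun ω' => X ω' - t) ω
      + Set.indicator Sᶜ (fun ω' => X ω' / n) ω
      + Set.indicator (S \ A i) (fun _ => t / (n - 1)) ω = X ω - t
    rw [Set.indicator_of_mem hω, Set.indicator_of_notMem (by simp [h1] : ω ∉ Sᶜ),
      Set.indicator_of_notMem (by simp [hω] : ω ∉ S \ A i)]
    ring
  have hG_onC : ∀ i ω, ω ∉ S → G i ω = X ω / n := by
    intro i ω hω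
    have h1 : ω ∉ A i := fun h => hω (hsub i h)
    show Set.indicator (A i) (fun ω' => X ω' - t) ω
      + Set.indicator Sᶜ (fun ω' => X ω' / n) ω
      + Set.indicator (S \ A i) (fun _ => t / (n - 1)) ω = X ω / n
    rw [Set.indicator_of_notMem h1, Set.indicator_of_mem (by simp [hω] : ω ∈ Sᶜ),
      Set.indicator_of_notMem (by simp [hω] : ω ∉ S \ A i)]
    ring
  have hG_onD : ∀ i ω, ω ∈ S \ A i → G i ω = t / ((n:ℝ) - 1) := by
    intro i ω hω
    show Set.indicator (A i) (fun ω' => X ω' - t) ω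
      + Set.indicator Sᶜ (fun ω' => X ω' / n) ω
      + Set.indicator (S \ A i) (fun _ => t / (n - 1)) ω = t / ((n:ℝ) - 1)
    rw [Set.indicator_of_notMem hω.2, Set.indicator_of_notMem (by simp [hω.1] : ω ∉ Sᶜ),
      Set.indicator_of_mem hω]
    ring
  have hGint : ∀ i, Integrable (G i) μ := by
    intro i
    apply Integrable.add
    apply Integrable.add
    · exact (hX.sub (integrable_const t)).indicator (hAmeas i)
    · exact (hX.div_const _).indicator hS.compl
    · exact (integrable_const _).indicator (hS.diff (hAmeas i))
  constructor
  · intro ω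
    show (∑ i, G i ω) = X ω
    by_cases hω : ω ∈ S
    · have hωU : ω ∈ ⋃ i, A i := by rw [hunion]; exact hω
      obtain ⟨j, hj⟩ := mem_iUnion.mp hωU
      have huniq : ∀ i, i ≠ j → ω ∉ A i := fun i hij hmem =>
        (Set.disjoint_left.mp (hdisj hij) hmem) hj
      have hterm : ∀ i : Fin n, G i ω = if i = j then X ω - t else t / ((n:ℝ) - 1) := by
        intro i
        by_cases hij : i = j
        · subst hij
          rw [if_pos rfl]
          exact hG_onA i ω hj
        · rw [if_neg hij]
          exact hG_onD i ω ⟨hω, huniq i hij⟩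
      rw [Finset.sum_congr rfl (fun i _ => hterm i)]
      have hsplitsum : ∀ i : Fin n, (if i = j then X ω - t else t/((n:ℝ)-1))
          = t/((n:ℝ)-1) + (if i = j then X ω - t - t/((n:ℝ)-1) else 0) := by
        intro i
        split <;> ring
      rw [Finset.sum_congr rfl (fun i _ => hsplitsum i), Finset.sum_add_distrib,
        Finset.sum_const, Finset.card_univ, Fintype.card_fin,
        Finset.sum_ite_eq' Finset.univ j (fun _ => X ω - t - t/((n:ℝ)-1))]
      simp only [Finset.mem_univ, if_true]
      rw [nsmul_eq_mul]
      field_simp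
      ring
    · rw [Finset.sum_congr rfl (fun i _ => hG_onC i ω hω), Finset.sum_const,
        Finset.card_univ, Fintype.card_fin, nsmul_eq_mul]
      field_simp
  · show (∑ i, avgQuantile μ (G i) (Icc 0 (β i) ∪ Icc (1 - B + β i) 1))
      = avgQuantile μ X (Icc 0 B)
    have hlower : ∀ i, ∫ u in Icc (0:ℝ) (β i), leftQuantile μ (G i) u
        = ∫ ω in A i, (X ω - t) ∂μ := by
      intro i
      have h1 : ∀ᵐ ω ∂μ, ω ∈ A i → G i ω ≤ c₀ - t := by
        filter_upwards [E2] with ω h2 hω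
        rw [hG_onA i ω hω]
        have := h2 (hsub i hω)
        linarith
      have h2 : ∀ᵐ ω ∂μ, ω ∉ A i → c₀ - t ≤ G i ω := by
        filter_upwards [E1, E3] with ω hE1 hE3 hω
        by_cases hωS : ω ∈ S
        · rw [hG_onD i ω ⟨hωS, hω⟩]
          have : (0:ℝ) ≤ t / ((n:ℝ)-1) := div_nonneg ht0 (by linarith)
          linarith
        · rw [hG_onC i ω hωS]
          have hc := hE3 hωS
          rcases le_or_gt 0 (X ω) with hX0 | hX0
          · have : (0:ℝ) ≤ X ω / n := div_nonneg hX0 (by linarith)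
            linarith
          · have h5 : X ω ≤ X ω / n := by
              rw [le_div_iff₀ hn0]
              nlinarith
            linarith
      have hres := lq_setIntegral_lower (hGint i) (hAmeas i) (hAprob i) (hβpos i) (hβ i).2 h1 h2
      rw [hres]
      exact setIntegral_congr_fun (hAmeas i) fun ω hω => hG_onA i ω hω
    have hupper : ∀ i, ∫ u in Icc (1 - B + β i) 1, leftQuantile μ (G i) u
        = (B - β i) * (t / ((n:ℝ)-1)) := by
      intro i
      have hDi : MeasurableSet (A i ∪ Sᶜ) := (hAmeas i).union hS.compl
      have hdiAB : Disjoint (A i) Sᶜ := disjoint_compl_right.mono_left (hsub i)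
      have hpD : (μ (A i ∪ Sᶜ)).toReal = 1 - B + β i := by
        rw [measure_union hdiAB hS.compl, measure_compl hS (measure_ne_top _ _), measure_univ,
          hSmeasure, hAfin i,
          ENNReal.toReal_add ENNReal.ofReal_ne_top
            (ne_top_of_le_ne_top ENNReal.one_ne_top tsub_le_self),
          ENNReal.toReal_ofReal (hβpos i).le,
          ENNReal.toReal_sub_of_le (ENNReal.ofReal_le_one.mpr hB1.le) ENNReal.one_ne_top,
          ENNReal.toReal_one, ENNReal.toReal_ofReal hB0.le]
        ring
      have hp0 : 0 < 1 - B + β i := by linarith [hβpos i]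
      have hp1 : 1 - B + β i < 1 := by linarith [hβlt i]
      have h1 : ∀ᵐ ω ∂μ, ω ∈ A i ∪ Sᶜ → G i ω ≤ t / ((n:ℝ)-1) := by
        filter_upwards [E1] with ω hE1 hω
        rcases hω with hω | hω
        · rw [hG_onA i ω hω]
          have : (0:ℝ) ≤ t / ((n:ℝ)-1) := div_nonneg ht0 (by linarith)
          linarith
        · rw [hG_onC i ω hω]
          rw [div_le_div_iff₀ hn0 hn10]
          nlinarith
      have h2 : ∀ᵐ ω ∂μ, ω ∉ A i ∪ Sᶜ → t / ((n:ℝ)-1) ≤ G i ω := by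
        refine ae_of_all _ fun ω hω => ?_
        have hωS : ω ∈ S := by
          by_contra h
          exact hω (Or.inr h)
        have hωA : ω ∉ A i := fun h => hω (Or.inl h)
        rw [hG_onD i ω ⟨hωS, hωA⟩]
      have hres := lq_setIntegral_upper (hGint i) hDi hpD hp0 hp1 h1 h2
      rw [hres]
      have hcomp : (A i ∪ Sᶜ)ᶜ = S \ A i := by
        rw [Set.compl_union, compl_compl, Set.diff_eq, Set.inter_comm]
      rw [hcomp,
        setIntegral_congr_fun (hS.diff (hAmeas i)) (fun ω hω => hG_onD i ω hω),
        setIntegral_const, smul_eq_mul]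
      congr 1
      rw [measureReal_def, measure_diff (hsub i) (hAmeas i).nullMeasurableSet (measure_ne_top _ _),
        hSmeasure, hAfin i,
        ENNReal.toReal_sub_of_le (ENNReal.ofReal_le_ofReal (hβlt i).le) ENNReal.ofReal_ne_top,
        ENNReal.toReal_ofReal hB0.le, ENNReal.toReal_ofReal (hβpos i).le]
    have hkeyX : ∫ u in Icc (0:ℝ) B, leftQuantile μ X u = ∫ ω in S, X ω ∂μ :=
      lq_setIntegral_lower hX hS hSreal hB0 hB1 E2 E3
    have havg : ∀ i : Fin n, avgQuantile μ (G i) (Icc 0 (β i) ∪ Icc (1 - B + β i) 1)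
        = B⁻¹ * ((∫ ω in A i, (X ω - t) ∂μ) + (B - β i) * (t / ((n:ℝ)-1))) := by
      intro i
      have hdisjI : Disjoint (Icc (0:ℝ) (β i)) (Icc (1 - B + β i) 1) := by
        rw [Set.disjoint_left]
        rintro u ⟨_, hu2⟩ ⟨hu3, _⟩
        linarith [hβlt i]
      have hvol : volume (Icc (0:ℝ) (β i) ∪ Icc (1 - B + β i) 1) = ENNReal.ofReal B := by
        rw [measure_union hdisjI measurableSet_Icc, Real.volume_Icc, Real.volume_Icc,
          ← ENNReal.ofReal_add (by linarith [hβpos i]) (by linarith [hβlt i])]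
        congr 1
        ring
      have hint1 : IntegrableOn (leftQuantile μ (G i)) (Icc (0:ℝ) (β i)) volume :=
        (lq_integrableOn_Icc (hGint i)).mono_set (Icc_subset_Icc le_rfl (hβ i).2.le)
      have hint2 : IntegrableOn (leftQuantile μ (G i)) (Icc (1 - B + β i) 1) volume :=
        (lq_integrableOn_Icc (hGint i)).mono_set (Icc_subset_Icc (by linarith [hβpos i]) le_rfl)
      unfold avgQuantile
      rw [hvol, ENNReal.toReal_ofReal hB0.le,
        setIntegral_union hdisjI measurableSet_Icc hint1 hint2, hlower i, hupper i]
    rw [Finset.sum_congr rfl (fun i _ => havg i), ← Finset.mul_sum]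
    unfold avgQuantile
    rw [Real.volume_Icc, sub_zero, ENNReal.toReal_ofReal hB0.le, hkeyX]
    congr 1
    have hsum1 : ∀ i : Fin n, ∫ ω in A i, (X ω - t) ∂μ = (∫ ω in A i, X ω ∂μ) - β i * t := by
      intro i
      rw [integral_sub hX.integrableOn (integrableOn_const (measure_ne_top _ _)),
        setIntegral_const, smul_eq_mul, measureReal_def, hAprob i]
    have hsum2 : ∑ i, ∫ ω in A i, X ω ∂μ = ∫ ω in S, X ω ∂μ := by
      rw [← hunion, integral_iUnion hAmeas hdisj hX.integrableOn, tsum_fintype]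
    calc ∑ i, ((∫ ω in A i, (X ω - t) ∂μ) + (B - β i) * (t / ((n:ℝ)-1)))
        = ∑ i, ((∫ ω in A i, X ω ∂μ) - β i * t + (B - β i) * (t / ((n:ℝ)-1))) :=
          Finset.sum_congr rfl fun i _ => by rw [hsum1 i]
      _ = ∫ ω in S, X ω ∂μ := by
          rw [Finset.sum_add_distrib, Finset.sum_sub_distrib, hsum2, ← Finset.sum_mul,
            ← hBdef, ← Finset.sum_mul]
          have hBsum : ∑ i : Fin n, (B - β i) = (n:ℝ) * B - B := by
            rw [Finset.sum_sub_distrib, Finset.sum_const, Finset.card_univ, Fintype.card_fin,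
              ← hBdef, nsmul_eq_mul]
          rw [hBsum]
          field_simp
          ring
end
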